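/- arXiv:math/0503221 — 5 statements merged into one kernel-verified Lean document; each statement's English description precedes it below -/
import Mathlib

section
/- Let μ be a probability measure on ℝ^d and let q ∈ [1, 2]. For any real-valued function u ∈ L¹(μ) ∩ L^q(μ), setting ū := ∫ u dμ, one has (∫|u|^q dμ)^{2/q} ≥ |ū|² + (q−1) (∫|u − ū|^q dμ)^{2/q}. -/
open MeasureTheory Real Filter
open scoped ENNReal RealInnerProductSpace

noncomputable section

/-- Euclidean space `ℝ^d`. -/
abbrev Ed (d : ℕ) : Type := EuclideanSpace ℝ (Fin d)

/-- `u ∈ H¹(μ)`: `u` is (weakly) differentiable with `u` and `|∇u|` in `L²(μ)`. -/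
def MemH1 {d : ℕ} (μ : Measure (Ed d)) (u : Ed d → ℝ) : Prop :=
  Differentiable ℝ u ∧ MemLp u 2 μ ∧ MemLp (fun x => ‖fderiv ℝ u x‖) 2 μ

/-- The generalized Poincaré (convex Sobolev) inequality with exponent `p` and constant `C`. -/
def GenPoincare {d : ℕ} (μ : Measure (Ed d)) (p C : ℝ) : Prop :=
  ∀ u : Ed d → ℝ, MemH1 μ u →
    1 / (p - 1) * ((∫ x, u x ^ 2 ∂μ) - (∫ x, |u x| ^ (2 / p) ∂μ) ^ p)
      ≤ C * ∫ x, ‖fderiv ℝ u x‖ ^ 2 ∂μ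

/-- The Poincaré (spectral gap) inequality with constant `C`. -/
def Poincare {d : ℕ} (μ : Measure (Ed d)) (C : ℝ) : Prop :=
  ∀ u : Ed d → ℝ, MemH1 μ u →
    (∫ x, (u x - ∫ y, u y ∂μ) ^ 2 ∂μ) ≤ C * ∫ x, ‖fderiv ℝ u x‖ ^ 2 ∂μ

/-- The (tight) logarithmic Sobolev inequality with constant `C`. -/
def LogSob {d : ℕ} (μ : Measure (Ed d)) (C : ℝ) : Prop :=
  ∀ u : Ed d → ℝ, MemH1 μ u →
    (∫ x, u x ^ 2 * Real.log (u x ^ 2 / ∫ y, u y ^ 2 ∂μ) ∂μ)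
      ≤ C * ∫ x, ‖fderiv ℝ u x‖ ^ 2 ∂μ

/-- The Laplacian `ΔZ = ∑ᵢ ∂²Z/∂xᵢ²`. -/
def lap {d : ℕ} (Z : Ed d → ℝ) (x : Ed d) : ℝ :=
  ∑ i : Fin d,
    fderiv ℝ (fun y => fderiv ℝ Z y (EuclideanSpace.single i 1)) x (EuclideanSpace.single i 1)

/-- The `L^r(ν)` norm `(∫ |Z|^r dν)^{1/r}`. -/
def Lnorm {d : ℕ} (ν : Measure (Ed d)) (r : ℝ) (Z : Ed d → ℝ) : ℝ :=
  (∫ x, |Z x| ^ r ∂ν) ^ (1 / r)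

private lemma my_rpow_add_le {x y r : ℝ} (hx : 0 ≤ x) (hy : 0 ≤ y) (hr0 : 0 ≤ r) (hr1 : r ≤ 1) :
    (x + y) ^ r ≤ x ^ r + y ^ r := by
  lift x to NNReal using hx
  lift y to NNReal using hy
  have := NNReal.rpow_add_le_add_rpow x y hr0 hr1
  exact_mod_cast this

private lemma my_psi {r : ℝ} (hr0 : 0 ≤ r) (hr1 : r ≤ 1) :
    ∀ t ∈ Set.Icc (0:ℝ) 1, 2 * r * t ≤ (1 + t) ^ r - (1 - t) ^ r := by
  set F : ℝ → ℝ := fun t => (1 + t) ^ r - (1 - t) ^ r - 2 * r * t with hF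
  have key : ∀ t ∈ Set.Icc (0:ℝ) 1, 0 ≤ F t := by
    have hd : ∀ t ∈ Set.Ioo (0:ℝ) 1, HasDerivAt F
        (r * ((1 + t) ^ (r - 1) + (1 - t) ^ (r - 1) - 2)) t := by
      intro t ht
      have h1 : HasDerivAt (fun t : ℝ => (1 + t) ^ r) (1 * r * (1 + t) ^ (r - 1)) t :=
        (HasDerivAt.const_add 1 (hasDerivAt_id t)).rpow_const
          (Or.inl (by simp only [id_eq]; intro h; linarith [ht.1]))
      have h2 : HasDerivAt (fun t : ℝ => (1 - t) ^ r) ((-1) * r * (1 - t) ^ (r - 1)) t :=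
        (HasDerivAt.const_sub 1 (hasDerivAt_id t)).rpow_const
          (Or.inl (by simp only [id_eq]; intro h; linarith [ht.2]))
      have h3 : HasDerivAt (fun t : ℝ => 2 * r * t) (2 * r) t := by
        simpa using (hasDerivAt_id t).const_mul (2 * r)
      have := (h1.sub h2).sub h3
      exact this.congr_deriv (by ring)
    have hc : ContinuousOn F (Set.Icc 0 1) := by
      apply ContinuousOn.sub
      apply ContinuousOn.sub
      · exact ((continuous_const.add continuous_id).continuousOn).rpow_const
          (fun x _ => Or.inr hr0)
      · exact ((continuous_const.sub continuous_id).continuousOn).rpow_const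
          (fun x _ => Or.inr hr0)
      · exact (continuous_const.mul continuous_id).continuousOn
    have hmono : MonotoneOn F (Set.Icc 0 1) := by
      apply monotoneOn_of_deriv_nonneg (convex_Icc 0 1) hc
      · intro t ht
        rw [interior_Icc] at ht
        exact (hd t ht).differentiableAt.differentiableWithinAt
      · intro t ht
        rw [interior_Icc] at ht
        rw [(hd t ht).deriv]
        have ha : (0:ℝ) < 1 + t := by nlinarith [ht.1]
        have hb : (0:ℝ) < 1 - t := by nlinarith [ht.2]
        have ha' : (0:ℝ) < (1 + t) ^ (r - 1) := Real.rpow_pos_of_pos ha _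
        have hb' : (0:ℝ) < (1 - t) ^ (r - 1) := Real.rpow_pos_of_pos hb _
        have e1 : ((1 + t) * (1 - t)) ^ (r - 1) = (1 + t) ^ (r - 1) * (1 - t) ^ (r - 1) :=
          Real.mul_rpow ha.le hb.le
        have hmul : (1:ℝ) ≤ (1 + t) ^ (r - 1) * (1 - t) ^ (r - 1) := by
          rw [← e1]
          exact Real.one_le_rpow_of_pos_of_le_one_of_nonpos (mul_pos ha hb) (by nlinarith [sq_nonneg t])
            (by linarith)
        have h2le : (2:ℝ) ≤ (1 + t) ^ (r - 1) + (1 - t) ^ (r - 1) := by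
          nlinarith [sq_nonneg ((1 + t) ^ (r - 1) - (1 - t) ^ (r - 1))]
        nlinarith
    have hF0 : F 0 = 0 := by simp [hF]
    intro t ht
    have := hmono (Set.mem_Icc.mpr ⟨le_refl 0, zero_le_one⟩) ht ht.1
    rw [hF0] at this
    exact this
  intro t ht
  have := key t ht
  simp only [hF] at this
  linarith

private lemma my_phi {q : ℝ} (hq1 : 1 ≤ q) (hq2 : q ≤ 2) :
    ∀ t ∈ Set.Icc (0:ℝ) 1, (1 + (q - 1) * t ^ 2) ^ (q / 2) ≤ ((1 + t) ^ q + (1 - t) ^ q) / 2 := by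
  set F : ℝ → ℝ := fun t => ((1 + t) ^ q + (1 - t) ^ q) / 2 - (1 + (q - 1) * t ^ 2) ^ (q / 2)
    with hF
  have hq0 : (0:ℝ) < q := by linarith
  have hbase : ∀ t : ℝ, (1:ℝ) ≤ 1 + (q - 1) * t ^ 2 := by
    intro t
    nlinarith [sq_nonneg t]
  have key : ∀ t ∈ Set.Icc (0:ℝ) 1, 0 ≤ F t := by
    have hd : ∀ t ∈ Set.Ioo (0:ℝ) 1, HasDerivAt F
        ((q * (1 + t) ^ (q - 1) - q * (1 - t) ^ (q - 1)) / 2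
          - (q - 1) * 2 * t * (q / 2) * (1 + (q - 1) * t ^ 2) ^ (q / 2 - 1)) t := by
      intro t ht
      have h1 : HasDerivAt (fun t : ℝ => (1 + t) ^ q) (1 * q * (1 + t) ^ (q - 1)) t :=
        (HasDerivAt.const_add 1 (hasDerivAt_id t)).rpow_const
          (Or.inl (by simp only [id_eq]; intro h; linarith [ht.1]))
      have h2 : HasDerivAt (fun t : ℝ => (1 - t) ^ q) ((-1) * q * (1 - t) ^ (q - 1)) t :=
        (HasDerivAt.const_sub 1 (hasDerivAt_id t)).rpow_const
          (Or.inl (by simp only [id_eq]; intro h; linarith [ht.2]))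
      have h3i : HasDerivAt (fun t : ℝ => 1 + (q - 1) * t ^ 2) ((q - 1) * (2 * t)) t := by
        have := (hasDerivAt_pow 2 t).const_mul (q - 1)
        have := this.const_add 1
        exact this.congr_deriv (by simp)
      have h3 : HasDerivAt (fun t : ℝ => (1 + (q - 1) * t ^ 2) ^ (q / 2))
          ((q - 1) * (2 * t) * (q / 2) * (1 + (q - 1) * t ^ 2) ^ (q / 2 - 1)) t :=
        h3i.rpow_const (Or.inl (by intro h; nlinarith [hbase t]))
      have := ((h1.add h2).div_const 2).sub h3
      exact this.congr_deriv (by ring)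
    have hc : ContinuousOn F (Set.Icc 0 1) := by
      apply ContinuousOn.sub
      · apply ContinuousOn.div_const
        apply ContinuousOn.add
        · exact ((continuous_const.add continuous_id).continuousOn).rpow_const
            (fun x _ => Or.inr hq0.le)
        · exact ((continuous_const.sub continuous_id).continuousOn).rpow_const
            (fun x _ => Or.inr hq0.le)
      · apply ContinuousOn.rpow_const
        · fun_prop
        · intro x _
          exact Or.inl (by intro h; nlinarith [hbase x])
    have hmono : MonotoneOn F (Set.Icc 0 1) := by
      apply monotoneOn_of_deriv_nonneg (convex_Icc 0 1) hc
      · intro t ht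
        rw [interior_Icc] at ht
        exact (hd t ht).differentiableAt.differentiableWithinAt
      · intro t ht
        rw [interior_Icc] at ht
        rw [(hd t ht).deriv]
        have hpsi := my_psi (r := q - 1) (by linarith) (by linarith) t
          (Set.mem_Icc.mpr ⟨ht.1.le, ht.2.le⟩)
        have hle1 : (1 + (q - 1) * t ^ 2) ^ (q / 2 - 1) ≤ 1 :=
          Real.rpow_le_one_of_one_le_of_nonpos (hbase t) (by linarith)
        have hpos : 0 ≤ (1 + (q - 1) * t ^ 2) ^ (q / 2 - 1) :=
          (Real.rpow_pos_of_pos (by nlinarith [hbase t]) _).le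
        have ht0 : 0 ≤ t := ht.1.le
        have hqq : 0 ≤ (q - 1) * t := by nlinarith
        nlinarith [mul_le_of_le_one_right hqq hle1, hq0]
    have hF0 : F 0 = 0 := by
      simp [hF]
    intro t ht
    have := hmono (Set.mem_Icc.mpr ⟨le_refl 0, zero_le_one⟩) ht ht.1
    rw [hF0] at this
    exact this
  intro t ht
  have := key t ht
  simp only [hF] at this
  linarith

private lemma two_point_sorted {q : ℝ} (hq1 : 1 ≤ q) (hq2 : q ≤ 2) {a b : ℝ}
    (hb0 : 0 ≤ b) (hba : b ≤ a) :
    (a ^ 2 + (q - 1) * b ^ 2) ^ (q / 2) ≤ ((a + b) ^ q + (a - b) ^ q) / 2 := by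
  have hq0 : (0:ℝ) < q := by linarith
  rcases eq_or_lt_of_le (le_trans hb0 hba) with ha0 | ha0
  · -- a = 0, hence b = 0
    have ha : a = 0 := ha0.symm
    have hb : b = 0 := le_antisymm (ha ▸ hba) hb0
    simp [ha, hb, Real.zero_rpow (by positivity : q / 2 ≠ 0), Real.zero_rpow hq0.ne']
  · set t := b / a with htdef
    have ht0 : 0 ≤ t := div_nonneg hb0 ha0.le
    have ht1 : t ≤ 1 := (div_le_one ha0).mpr hba
    have hphi := my_phi hq1 hq2 t (Set.mem_Icc.mpr ⟨ht0, ht1⟩)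
    have hb_eq : b = a * t := by rw [htdef]; field_simp
    have e1 : a ^ 2 + (q - 1) * b ^ 2 = a ^ 2 * (1 + (q - 1) * t ^ 2) := by
      rw [hb_eq]; ring
    have e2 : (a ^ 2 + (q - 1) * b ^ 2) ^ (q / 2)
        = (a ^ q) * (1 + (q - 1) * t ^ 2) ^ (q / 2) := by
      rw [e1, Real.mul_rpow (by positivity) (by nlinarith [sq_nonneg t])]
      congr 1
      rw [← Real.rpow_natCast a 2, ← Real.rpow_mul ha0.le]
      congr 1
      ring
    have e3 : (a + b) ^ q = a ^ q * (1 + t) ^ q := by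
      rw [hb_eq, ← Real.mul_rpow ha0.le (by linarith)]
      ring_nf
    have e4 : (a - b) ^ q = a ^ q * (1 - t) ^ q := by
      rw [hb_eq, ← Real.mul_rpow ha0.le (by linarith)]
      ring_nf
    rw [e2, e3, e4]
    have haq : (0:ℝ) < a ^ q := Real.rpow_pos_of_pos ha0 q
    calc a ^ q * (1 + (q - 1) * t ^ 2) ^ (q / 2)
        ≤ a ^ q * (((1 + t) ^ q + (1 - t) ^ q) / 2) := by
          exact mul_le_mul_of_nonneg_left hphi haq.le
      _ = (a ^ q * (1 + t) ^ q + a ^ q * (1 - t) ^ q) / 2 := by ring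

private lemma two_point_nonneg {q : ℝ} (hq1 : 1 ≤ q) (hq2 : q ≤ 2) {a b : ℝ}
    (ha0 : 0 ≤ a) (hb0 : 0 ≤ b) :
    (a ^ 2 + (q - 1) * b ^ 2) ^ (q / 2) ≤ ((a + b) ^ q + |a - b| ^ q) / 2 := by
  rcases le_total b a with h | h
  · have := two_point_sorted hq1 hq2 hb0 h
    rwa [abs_of_nonneg (by linarith)]
  · have key := two_point_sorted hq1 hq2 ha0 h
    have hsq : a ^ 2 ≤ b ^ 2 := by nlinarith
    have h1 : a ^ 2 + (q - 1) * b ^ 2 ≤ b ^ 2 + (q - 1) * a ^ 2 := by nlinarith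
    calc (a ^ 2 + (q - 1) * b ^ 2) ^ (q / 2)
        ≤ (b ^ 2 + (q - 1) * a ^ 2) ^ (q / 2) :=
          Real.rpow_le_rpow (by nlinarith) h1 (by positivity)
      _ ≤ ((b + a) ^ q + (b - a) ^ q) / 2 := key
      _ = ((a + b) ^ q + |a - b| ^ q) / 2 := by
          rw [abs_of_nonpos (by linarith), add_comm b a]
          congr 2
          ring

private lemma two_point {q : ℝ} (hq1 : 1 ≤ q) (hq2 : q ≤ 2) (a b : ℝ) :
    (a ^ 2 + (q - 1) * b ^ 2) ^ (q / 2) ≤ (|a + b| ^ q + |a - b| ^ q) / 2 := by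
  rcases le_total 0 a with ha | ha <;> rcases le_total 0 b with hb | hb
  · have := two_point_nonneg hq1 hq2 ha hb
    rw [abs_of_nonneg (show (0:ℝ) ≤ a + b by linarith)]
    exact this
  · have := two_point_nonneg hq1 hq2 ha (by linarith : (0:ℝ) ≤ -b)
    rw [show a + -b = a - b by ring, show a - -b = a + b by ring, neg_sq] at this
    rw [← abs_of_nonneg (by linarith : (0:ℝ) ≤ a - b)] at this
    linarith
  · have := two_point_nonneg hq1 hq2 (by linarith : (0:ℝ) ≤ -a) hb
    rw [show -a + b = -(a - b) by ring, show -a - b = -(a + b) by ring, neg_sq, abs_neg]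
      at this
    rw [← abs_of_nonneg (by linarith : (0:ℝ) ≤ -(a - b)), abs_neg] at this
    linarith
  · have := two_point_nonneg hq1 hq2 (by linarith : (0:ℝ) ≤ -a) (by linarith : (0:ℝ) ≤ -b)
    rw [show -a + -b = -(a + b) by ring, show -a - -b = -(a - b) by ring, neg_sq, neg_sq,
      abs_neg] at this
    rw [← abs_of_nonneg (by linarith : (0:ℝ) ≤ -(a + b)), abs_neg] at this
    linarith

private lemma rev_mink {α : Type*} [MeasurableSpace α] {μ : Measure α} {r : ℝ}
    (hr0 : 0 < r) (hr1 : r ≤ 1) {F G : α → ℝ}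
    (hF0 : ∀ x, 0 ≤ F x) (hG0 : ∀ x, 0 ≤ G x)
    (hFi : Integrable (fun x => F x ^ r) μ) (hGi : Integrable (fun x => G x ^ r) μ)
    (hSi : Integrable (fun x => (F x + G x) ^ r) μ) :
    (∫ x, F x ^ r ∂μ) ^ (1/r) + (∫ x, G x ^ r ∂μ) ^ (1/r)
      ≤ (∫ x, (F x + G x) ^ r ∂μ) ^ (1/r) := by
  set A := ∫ x, F x ^ r ∂μ with hA
  set B := ∫ x, G x ^ r ∂μ with hB
  have hA0 : 0 ≤ A := integral_nonneg fun x => Real.rpow_nonneg (hF0 x) r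
  have hB0 : 0 ≤ B := integral_nonneg fun x => Real.rpow_nonneg (hG0 x) r
  have hmonoF : A ≤ ∫ x, (F x + G x) ^ r ∂μ := by
    apply integral_mono hFi hSi
    intro x
    exact Real.rpow_le_rpow (hF0 x) (by linarith [hG0 x]) hr0.le
  have hmonoG : B ≤ ∫ x, (F x + G x) ^ r ∂μ := by
    apply integral_mono hGi hSi
    intro x
    exact Real.rpow_le_rpow (hG0 x) (by linarith [hF0 x]) hr0.le
  rcases eq_or_lt_of_le hA0 with hA0' | hApos
  · rw [← hA0', Real.zero_rpow (by positivity), zero_add]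
    exact Real.rpow_le_rpow hB0 hmonoG (by positivity)
  rcases eq_or_lt_of_le hB0 with hB0' | hBpos
  · rw [← hB0', Real.zero_rpow (by positivity), add_zero]
    exact Real.rpow_le_rpow hA0 hmonoF (by positivity)
  -- main case
  set lam := A ^ (1/r) / (A ^ (1/r) + B ^ (1/r)) with hlam
  have hS0 : 0 < A ^ (1/r) + B ^ (1/r) := by positivity
  have hlam0 : 0 < lam := by
    apply div_pos (Real.rpow_pos_of_pos hApos _) hS0
  have hlam1 : lam < 1 := by
    rw [hlam, div_lt_one hS0]
    nlinarith [Real.rpow_pos_of_pos hBpos (1/r)]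
  have hpoint : ∀ x, lam ^ (1 - r) * F x ^ r + (1 - lam) ^ (1 - r) * G x ^ r
      ≤ (F x + G x) ^ r := by
    intro x
    have hcc := (Real.concaveOn_rpow (le_of_lt hr0) hr1).2
      (Set.mem_Ici.mpr (div_nonneg (hF0 x) hlam0.le))
      (Set.mem_Ici.mpr (div_nonneg (hG0 x) (show (0:ℝ) ≤ 1 - lam by linarith)))
      hlam0.le (show (0:ℝ) ≤ 1 - lam by linarith) (by ring)
    simp only [smul_eq_mul] at hcc
    have hne2 : (1:ℝ) - lam ≠ 0 := by linarith
    have e0 : lam * (F x / lam) + (1 - lam) * (G x / (1 - lam)) = F x + G x := by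
      field_simp
    rw [e0] at hcc
    have e1 : lam * (F x / lam) ^ r = lam ^ (1 - r) * F x ^ r := by
      rw [Real.div_rpow (hF0 x) hlam0.le, Real.rpow_sub hlam0, Real.rpow_one]
      field_simp
    have e2 : (1 - lam) * (G x / (1 - lam)) ^ r = (1 - lam) ^ (1 - r) * G x ^ r := by
      rw [Real.div_rpow (hG0 x) (by linarith), Real.rpow_sub (by linarith), Real.rpow_one]
      field_simp
    rw [e1, e2] at hcc
    exact hcc
  have hint : lam ^ (1 - r) * A + (1 - lam) ^ (1 - r) * B ≤ ∫ x, (F x + G x) ^ r ∂μ := by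
    have h1 : ∫ x, (lam ^ (1 - r) * F x ^ r + (1 - lam) ^ (1 - r) * G x ^ r) ∂μ
        ≤ ∫ x, (F x + G x) ^ r ∂μ :=
      integral_mono ((hFi.const_mul _).add (hGi.const_mul _)) hSi hpoint
    rw [integral_add (hFi.const_mul _) (hGi.const_mul _), integral_const_mul,
      integral_const_mul] at h1
    exact h1
  -- algebra: lam^(1-r)*A + (1-lam)^(1-r)*B = (A^(1/r)+B^(1/r))^r
  have halg : lam ^ (1 - r) * A + (1 - lam) ^ (1 - r) * B = (A ^ (1/r) + B ^ (1/r)) ^ r := by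
    have hAr : A ^ (1/r) > 0 := Real.rpow_pos_of_pos hApos _
    have hBr : B ^ (1/r) > 0 := Real.rpow_pos_of_pos hBpos _
    have h1lam : 1 - lam = B ^ (1/r) / (A ^ (1/r) + B ^ (1/r)) := by
      rw [hlam]
      field_simp
      ring
    rw [h1lam, hlam]
    rw [Real.div_rpow hAr.le hS0.le, Real.div_rpow hBr.le hS0.le]
    have eA : (A ^ (1/r)) ^ (1 - r) = A ^ ((1-r)/r) := by
      rw [← Real.rpow_mul hA0]
      congr 1
      field_simp
    have eB : (B ^ (1/r)) ^ (1 - r) = B ^ ((1-r)/r) := by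
      rw [← Real.rpow_mul hB0]
      congr 1
      field_simp
    rw [eA, eB]
    have eA2 : A ^ ((1-r)/r) * A = A ^ (1/r) := by
      nth_rewrite 2 [← Real.rpow_one A]
      rw [← Real.rpow_add hApos]
      congr 1
      field_simp
      ring
    have eB2 : B ^ ((1-r)/r) * B = B ^ (1/r) := by
      nth_rewrite 2 [← Real.rpow_one B]
      rw [← Real.rpow_add hBpos]
      congr 1
      field_simp
      ring
    rw [div_mul_eq_mul_div, div_mul_eq_mul_div, eA2, eB2, ← add_div]
    rw [Real.rpow_sub hS0, Real.rpow_one]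
    field_simp
  rw [halg] at hint
  calc A ^ (1/r) + B ^ (1/r)
      = ((A ^ (1/r) + B ^ (1/r)) ^ r) ^ (1/r) := by
        rw [← Real.rpow_mul hS0.le]
        rw [mul_one_div, div_self hr0.ne', Real.rpow_one]
      _ ≤ (∫ x, (F x + G x) ^ r ∂μ) ^ (1/r) :=
        Real.rpow_le_rpow (by positivity) hint (by positivity)

private lemma sq_rpow_half {q : ℝ} (hq : 0 ≤ q) (x : ℝ) : (x ^ 2) ^ (q / 2) = |x| ^ q := by
  rw [← sq_abs, ← Real.rpow_natCast |x| 2, ← Real.rpow_mul (abs_nonneg x)]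
  congr 1
  push_cast
  ring

private lemma memLq_int {α : Type*} [MeasurableSpace α] {μ : Measure α} {q : ℝ} (hq : 1 ≤ q)
    {f : α → ℝ} (hf : MemLp f (ENNReal.ofReal q) μ) : Integrable (fun x => |f x| ^ q) μ := by
  have h0 : ENNReal.ofReal q ≠ 0 := by
    simp [ENNReal.ofReal_eq_zero]; linarith
  have := hf.integrable_norm_rpow h0 ENNReal.ofReal_ne_top
  simpa [ENNReal.toReal_ofReal (by linarith : (0:ℝ) ≤ q), Real.norm_eq_abs] using this

private lemma bcl {α : Type*} [MeasurableSpace α] {μ : Measure α} {q : ℝ}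
    (hq1 : 1 ≤ q) (hq2 : q ≤ 2)
    {f g : α → ℝ} (hf : MemLp f (ENNReal.ofReal q) μ) (hg : MemLp g (ENNReal.ofReal q) μ) :
    2 * (∫ x, |f x| ^ q ∂μ) ^ (2/q) + 2 * (q - 1) * (∫ x, |g x| ^ q ∂μ) ^ (2/q)
      ≤ (∫ x, |f x + g x| ^ q ∂μ) ^ (2/q) + (∫ x, |f x - g x| ^ q ∂μ) ^ (2/q) := by
  have hq0 : (0:ℝ) < q := by linarith
  have hr0 : (0:ℝ) < q / 2 := by linarith
  have hr1 : q / 2 ≤ 1 := by linarith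
  have hfg1 : MemLp (fun x => f x + g x) (ENNReal.ofReal q) μ := hf.add hg
  have hfg2 : MemLp (fun x => f x - g x) (ENNReal.ofReal q) μ := hf.sub hg
  have hfi := memLq_int hq1 hf
  have hgi := memLq_int hq1 hg
  have hfgi1 := memLq_int hq1 hfg1
  have hfgi2 := memLq_int hq1 hfg2
  set F : α → ℝ := fun x => (f x) ^ 2 with hF
  set G : α → ℝ := fun x => (q - 1) * (g x) ^ 2 with hG
  have hF0 : ∀ x, 0 ≤ F x := fun x => sq_nonneg _
  have hG0 : ∀ x, 0 ≤ G x := fun x => mul_nonneg (by linarith) (sq_nonneg _)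
  have hFr : ∀ x, F x ^ (q/2) = |f x| ^ q := fun x => sq_rpow_half hq0.le (f x)
  have hGr : ∀ x, G x ^ (q/2) = (q - 1) ^ (q/2) * |g x| ^ q := by
    intro x
    rw [hG]
    rw [Real.mul_rpow (by linarith) (sq_nonneg _), sq_rpow_half hq0.le]
  have hFi : Integrable (fun x => F x ^ (q/2)) μ := by
    simp only [hFr]; exact hfi
  have hGi : Integrable (fun x => G x ^ (q/2)) μ := by
    simp only [hGr]; exact hgi.const_mul _
  -- pointwise two-point inequality
  have hpt : ∀ x, (F x + G x) ^ (q/2) ≤ (|f x + g x| ^ q + |f x - g x| ^ q) / 2 :=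
    fun x => two_point hq1 hq2 (f x) (g x)
  -- integrability of (F+G)^(q/2)
  have hSmeas : AEStronglyMeasurable (fun x => (F x + G x) ^ (q/2)) μ := by
    apply (Real.continuous_rpow_const hr0.le).comp_aestronglyMeasurable
    apply AEStronglyMeasurable.add
    · exact (continuous_pow 2).comp_aestronglyMeasurable hf.1
    · exact (continuous_const.mul (continuous_pow 2)).comp_aestronglyMeasurable hg.1
  have hSi : Integrable (fun x => (F x + G x) ^ (q/2)) μ := by
    apply Integrable.mono' ((hfgi1.add hfgi2).div_const 2) hSmeas
    filter_upwards with x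
    rw [Real.norm_eq_abs, abs_of_nonneg (Real.rpow_nonneg (add_nonneg (hF0 x) (hG0 x)) _)]
    exact hpt x
  -- reverse Minkowski
  have hrm := rev_mink hr0 hr1 hF0 hG0 hFi hGi hSi
  have h2q : 1 / (q/2) = 2 / q := by field_simp
  rw [h2q] at hrm
  -- simplify the two lower terms
  have eF : (∫ x, F x ^ (q/2) ∂μ) = ∫ x, |f x| ^ q ∂μ := by
    congr 1; funext x; exact hFr x
  have eG : (∫ x, G x ^ (q/2) ∂μ) ^ (2/q) = (q - 1) * (∫ x, |g x| ^ q ∂μ) ^ (2/q) := by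
    have : (∫ x, G x ^ (q/2) ∂μ) = (q - 1) ^ (q/2) * ∫ x, |g x| ^ q ∂μ := by
      rw [← integral_const_mul]
      congr 1; funext x; exact hGr x
    rw [this, Real.mul_rpow (Real.rpow_nonneg (by linarith) _)
      (integral_nonneg fun x => Real.rpow_nonneg (abs_nonneg _) _)]
    congr 1
    rw [← Real.rpow_mul (by linarith : (0:ℝ) ≤ q - 1)]
    rw [show q / 2 * (2 / q) = 1 by field_simp, Real.rpow_one]
  rw [eF, eG] at hrm
  -- upper bound on ∫ (F+G)^(q/2)
  have hup : ∫ x, (F x + G x) ^ (q/2) ∂μ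
      ≤ ((∫ x, |f x + g x| ^ q ∂μ) + (∫ x, |f x - g x| ^ q ∂μ)) / 2 := by
    have h1 : ∫ x, (F x + G x) ^ (q/2) ∂μ
        ≤ ∫ x, (|f x + g x| ^ q + |f x - g x| ^ q) / 2 ∂μ :=
      integral_mono hSi ((hfgi1.add hfgi2).div_const 2) hpt
    rw [integral_div, integral_add hfgi1 hfgi2] at h1
    exact h1
  -- power mean step
  set X := ∫ x, |f x + g x| ^ q ∂μ with hX
  set Y := ∫ x, |f x - g x| ^ q ∂μ with hY
  have hX0 : 0 ≤ X := integral_nonneg fun x => Real.rpow_nonneg (abs_nonneg _) _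
  have hY0 : 0 ≤ Y := integral_nonneg fun x => Real.rpow_nonneg (abs_nonneg _) _
  have hmid : ((X + Y) / 2) ^ (2/q) ≤ (X ^ (2/q) + Y ^ (2/q)) / 2 := by
    have hcv := (convexOn_rpow (p := 2/q) (by rw [le_div_iff₀ hq0]; linarith)).2
      (Set.mem_Ici.mpr hX0) (Set.mem_Ici.mpr hY0)
      (by norm_num : (0:ℝ) ≤ 1/2) (by norm_num : (0:ℝ) ≤ 1/2) (by norm_num)
    simp only [smul_eq_mul] at hcv
    calc ((X + Y) / 2) ^ (2/q) = (1/2 * X + 1/2 * Y) ^ (2/q) := by ring_nf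
      _ ≤ 1/2 * X ^ (2/q) + 1/2 * Y ^ (2/q) := hcv
      _ = (X ^ (2/q) + Y ^ (2/q)) / 2 := by ring
  have hfinal : (∫ x, (F x + G x) ^ (q/2) ∂μ) ^ (2/q) ≤ (X ^ (2/q) + Y ^ (2/q)) / 2 := by
    refine le_trans (Real.rpow_le_rpow ?_ hup (by positivity)) hmid
    exact integral_nonneg fun x => Real.rpow_nonneg (add_nonneg (hF0 x) (hG0 x)) _
  have hlow : (∫ x, |f x| ^ q ∂μ) ^ (2/q) + (q - 1) * (∫ x, |g x| ^ q ∂μ) ^ (2/q)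
      ≤ (∫ x, (F x + G x) ^ (q/2) ∂μ) ^ (2/q) := hrm
  linarith

private lemma jensen_sq {α : Type*} [MeasurableSpace α] {μ : Measure α} [IsProbabilityMeasure μ]
    {q : ℝ} (hq1 : 1 < q) {w : α → ℝ} (hw : MemLp w (ENNReal.ofReal q) μ)
    (hwi : Integrable w μ) :
    (∫ x, w x ∂μ) ^ 2 ≤ (∫ x, |w x| ^ q ∂μ) ^ (2/q) := by
  have hq0 : (0:ℝ) < q := by linarith
  have hcj : q.HolderConjugate (Real.conjExponent q) := Real.HolderConjugate.conjExponent hq1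
  have habs : |∫ x, w x ∂μ| ≤ ∫ x, |w x| ∂μ := by
    simpa [Real.norm_eq_abs] using norm_integral_le_integral_norm (μ := μ) w
  have hhold : ∫ x, |w x| * 1 ∂μ
      ≤ (∫ x, |w x| ^ q ∂μ) ^ (1/q) * (∫ x, (1:ℝ) ^ (Real.conjExponent q) ∂μ)
        ^ (1 / Real.conjExponent q) := by
    apply integral_mul_le_Lp_mul_Lq_of_nonneg hcj
    · filter_upwards with x; exact abs_nonneg _
    · filter_upwards with x; norm_num
    · exact hw.abs
    · exact memLp_const 1
  have hone : (∫ x, (1:ℝ) ^ (Real.conjExponent q) ∂μ) ^ (1 / Real.conjExponent q) = 1 := by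
    simp [Real.one_rpow]
  rw [hone, mul_one] at hhold
  simp only [mul_one] at hhold
  have h1 : |∫ x, w x ∂μ| ≤ (∫ x, |w x| ^ q ∂μ) ^ (1/q) := le_trans habs hhold
  have hI0 : (0:ℝ) ≤ ∫ x, |w x| ^ q ∂μ :=
    integral_nonneg fun x => Real.rpow_nonneg (abs_nonneg _) _
  calc (∫ x, w x ∂μ) ^ 2 = |∫ x, w x ∂μ| ^ 2 := (sq_abs _).symm
    _ ≤ ((∫ x, |w x| ^ q ∂μ) ^ (1/q)) ^ 2 := by
        apply pow_le_pow_left₀ (abs_nonneg _) h1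
    _ = (∫ x, |w x| ^ q ∂μ) ^ (2/q) := by
        rw [← Real.rpow_natCast ((∫ x, |w x| ^ q ∂μ) ^ (1/q)) 2, ← Real.rpow_mul hI0]
        congr 1
        push_cast
        ring

/-- **Lemma 4.** For `q ∈ [1,2]` and `u ∈ L¹(μ) ∩ L^q(μ)` with mean `ū`,
`(∫|u|^q dμ)^{2/q} ≥ |ū|² + (q−1)(∫|u−ū|^q dμ)^{2/q}`. -/
theorem mean_moment_lower_bound
    (d : ℕ) (μ : Measure (Ed d)) (hμ : IsProbabilityMeasure μ)
    (q : ℝ) (hq : q ∈ Set.Icc (1 : ℝ) 2)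
    (u : Ed d → ℝ) (hu1 : Integrable u μ) (huq : MemLp u (ENNReal.ofReal q) μ)
    (ubar : ℝ) (hubar : ubar = ∫ x, u x ∂μ) :
    (∫ x, |u x| ^ q ∂μ) ^ (2 / q)
      ≥ |ubar| ^ 2 + (q - 1) * (∫ x, |u x - ubar| ^ q ∂μ) ^ (2 / q) := by
  obtain ⟨hq1, hq2⟩ := hq
  have hq0 : (0:ℝ) < q := by linarith
  have hvi : Integrable (fun x => u x - ubar) μ := hu1.sub (integrable_const ubar)
  have hvq : MemLp (fun x => u x - ubar) (ENNReal.ofReal q) μ :=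
    huq.sub (memLp_const ubar)
  have hv0 : ∫ x, (u x - ubar) ∂μ = 0 := by
    rw [integral_sub hu1 (integrable_const ubar), integral_const]
    simp [hubar]
  rcases eq_or_lt_of_le hq1 with hq1' | hq1'
  · -- q = 1
    rw [← hq1']
    have habs : |∫ x, u x ∂μ| ≤ ∫ x, |u x| ∂μ := by
      simpa [Real.norm_eq_abs] using norm_integral_le_integral_norm (μ := μ) u
    have hI0 : (0:ℝ) ≤ ∫ x, |u x| ∂μ := integral_nonneg fun x => abs_nonneg _
    have e1 : (∫ x, |u x| ^ (1:ℝ) ∂μ) = ∫ x, |u x| ∂μ := by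
      simp [Real.rpow_one]
    rw [e1]
    have e2 : ((2:ℝ)/1) = ((2:ℕ):ℝ) := by norm_num
    rw [e2, Real.rpow_natCast]
    have : |ubar| ^ 2 ≤ (∫ x, |u x| ∂μ) ^ 2 := by
      apply pow_le_pow_left₀ (abs_nonneg _)
      rw [hubar]
      exact habs
    simp only [sub_self, zero_mul, add_zero, ge_iff_le]
    convert this using 2
  · -- 1 < q
    set I := ∫ x, |u x - ubar| ^ q ∂μ with hI
    have hI0 : 0 ≤ I := integral_nonneg fun x => Real.rpow_nonneg (abs_nonneg _) _
    set K := I ^ (2/q) with hK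
    have hK0 : 0 ≤ K := Real.rpow_nonneg hI0 _
    set h : ℝ → ℝ := fun t => (∫ x, |ubar + t * (u x - ubar)| ^ q ∂μ) ^ (2/q) with hh
    have hwq : ∀ t : ℝ, MemLp (fun x => ubar + t * (u x - ubar)) (ENNReal.ofReal q) μ :=
      fun t => (memLp_const ubar).add (hvq.const_mul t)
    have hwi : ∀ t : ℝ, Integrable (fun x => ubar + t * (u x - ubar)) μ :=
      fun t => (integrable_const ubar).add (hvi.const_mul t)
    have hwint : ∀ t : ℝ, ∫ x, (ubar + t * (u x - ubar)) ∂μ = ubar := by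
      intro t
      rw [integral_add (integrable_const ubar) (hvi.const_mul t), integral_const,
        integral_const_mul, hv0]
      simp
    have hJ : ∀ t : ℝ, ubar ^ 2 ≤ h t := by
      intro t
      have := jensen_sq hq1' (hwq t) (hwi t)
      rwa [hwint t] at this
    have hgq : ∀ s : ℝ, (∫ x, |s * (u x - ubar)| ^ q ∂μ) ^ (2/q) = s ^ 2 * K := by
      intro s
      have e1 : (∫ x, |s * (u x - ubar)| ^ q ∂μ) = |s| ^ q * I := by
        rw [hI, ← integral_const_mul]
        apply integral_congr_ae
        filter_upwards with x
        rw [abs_mul, Real.mul_rpow (abs_nonneg _) (abs_nonneg _)]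
      rw [e1, Real.mul_rpow (Real.rpow_nonneg (abs_nonneg _) _) hI0, ← hK]
      congr 1
      rw [← Real.rpow_mul (abs_nonneg s), show q * (2/q) = 2 by field_simp,
        show (2:ℝ) = ((2:ℕ):ℝ) by norm_num, Real.rpow_natCast, sq_abs]
    have hmid : ∀ s : ℝ, 2 * h s + 2 * (q - 1) * (s ^ 2 * K) ≤ h (2 * s) + ubar ^ 2 := by
      intro s
      have hb := bcl hq1 hq2 (hwq s) (hvq.const_mul s)
      have e_plus : (∫ x, |ubar + s * (u x - ubar) + s * (u x - ubar)| ^ q ∂μ)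
          = ∫ x, |ubar + 2 * s * (u x - ubar)| ^ q ∂μ := by
        apply integral_congr_ae
        filter_upwards with x
        congr 1
        congr 1
        ring
      have e_minus : (∫ x, |ubar + s * (u x - ubar) - s * (u x - ubar)| ^ q ∂μ)
          = |ubar| ^ q := by
        have e : ∀ x : Ed d, |ubar + s * (u x - ubar) - s * (u x - ubar)| ^ q
            = |ubar| ^ q := by
          intro x
          congr 1
          congr 1
          ring
        rw [integral_congr_ae (Filter.Eventually.of_forall e), integral_const]
        simp
      have e_ub : (|ubar| ^ q) ^ (2/q) = ubar ^ 2 := by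
        rw [← Real.rpow_mul (abs_nonneg ubar), show q * (2/q) = 2 by field_simp,
          show (2:ℝ) = ((2:ℕ):ℝ) by norm_num, Real.rpow_natCast, sq_abs]
      rw [hgq s, e_plus, e_minus, e_ub] at hb
      exact hb
    have claim : ∀ n : ℕ, 2^n * (h ((1/2:ℝ)^n) - ubar^2 - (q-1)*(((1/2:ℝ)^n)^2 * K))
        ≤ h 1 - ubar^2 - (q-1)*(((1:ℝ))^2*K) := by
      intro n
      induction n with
      | zero => simp
      | succ n ih =>
        refine le_trans ?_ ih
        have hs := hmid ((1/2:ℝ)^(n+1))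
        have e2s : (2:ℝ) * (1/2:ℝ)^(n+1) = (1/2:ℝ)^n := by
          rw [pow_succ]; ring
        rw [e2s] at hs
        have hpow : (0:ℝ) ≤ 2^n := by positivity
        have key : 2 * (h ((1/2:ℝ)^(n+1)) - ubar^2 - (q-1)*(((1/2:ℝ)^(n+1))^2*K))
            ≤ h ((1/2:ℝ)^n) - ubar^2 - (q-1)*(((1/2:ℝ)^n)^2*K) := by
          have e4 : ((1/2:ℝ)^n)^2 = 4 * ((1/2:ℝ)^(n+1))^2 := by
            rw [pow_succ]; ring
          rw [e4]
          linarith [hs]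
        calc (2:ℝ)^(n+1) * (h ((1/2:ℝ)^(n+1)) - ubar^2 - (q-1)*(((1/2:ℝ)^(n+1))^2*K))
            = 2^n * (2 * (h ((1/2:ℝ)^(n+1)) - ubar^2 - (q-1)*(((1/2:ℝ)^(n+1))^2*K))) := by
              rw [pow_succ]; ring
          _ ≤ 2^n * (h ((1/2:ℝ)^n) - ubar^2 - (q-1)*(((1/2:ℝ)^n)^2*K)) :=
              mul_le_mul_of_nonneg_left key hpow
    have hlb : ∀ n : ℕ, (-((q-1) * K)) * (1/2:ℝ)^n
        ≤ h 1 - ubar^2 - (q-1)*(((1:ℝ))^2*K) := by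
      intro n
      refine le_trans ?_ (claim n)
      have hJn := hJ ((1/2:ℝ)^n)
      have e : (2:ℝ)^n * ((1/2:ℝ)^n)^2 = (1/2:ℝ)^n := by
        rw [show ((1/2:ℝ)^n)^2 = ((1/2:ℝ)^2)^n from pow_right_comm _ _ _, ← mul_pow]
        norm_num
      have h2n : (0:ℝ) ≤ 2^n := by positivity
      have hstep : 2^n * (-((q-1) * (((1/2:ℝ)^n)^2 * K)))
          ≤ 2^n * (h ((1/2:ℝ)^n) - ubar^2 - (q-1)*(((1/2:ℝ)^n)^2*K)) := by
        apply mul_le_mul_of_nonneg_left _ h2n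
        have hmul0 : 0 ≤ (q-1) * (((1/2:ℝ)^n)^2 * K) :=
          mul_nonneg (by linarith) (mul_nonneg (by positivity) hK0)
        linarith [hJn]
      refine le_trans (le_of_eq ?_) hstep
      linear_combination ((q-1) * K) * e
    have htend : Tendsto (fun n : ℕ => (-((q-1) * K)) * (1/2:ℝ)^n) atTop (nhds 0) := by
      have h1 := tendsto_pow_atTop_nhds_zero_of_lt_one
        (by norm_num : (0:ℝ) ≤ 1/2) (by norm_num : (1/2:ℝ) < 1)
      have h2 := h1.const_mul (-((q-1) * K))
      simpa using h2
    have hfin : (0:ℝ) ≤ h 1 - ubar^2 - (q-1)*(((1:ℝ))^2*K) :=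
      le_of_tendsto htend (Filter.Eventually.of_forall hlb)
    have e1 : h 1 = (∫ x, |u x| ^ q ∂μ) ^ (2/q) := by
      simp only [hh]
      congr 1
      apply integral_congr_ae
      filter_upwards with x
      congr 1
      congr 1
      ring
    rw [ge_iff_le, sq_abs]
    have : ubar^2 + (q-1)*K ≤ h 1 := by
      have : ((1:ℝ))^2 = 1 := one_pow 2
      nlinarith [hfin]
    rw [e1] at this
    exact this
end
end

section
/- Let μ be a probability measure on ℝ^d and let q ∈ (2, ∞). For any real-valued function u ∈ L^q(μ), setting ū := ∫ u dμ, one has (∫|u|^q dμ)^{2/q} ≤ |ū|² + (q−1) (∫|u − ū|^q dμ)^{2/q}. -/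
open MeasureTheory Real Filter
open scoped ENNReal RealInnerProductSpace

noncomputable section

private lemma sq_rpow_half' (y c : ℝ) : ((y : ℝ) ^ 2) ^ (c / 2) = |y| ^ c := by
  rw [← sq_abs, ← Real.rpow_natCast |y| 2, ← Real.rpow_mul (abs_nonneg y)]
  congr 1
  push_cast
  ring

private lemma rpow_add_le_two_rpow' {a b c : ℝ} (ha : 0 ≤ a) (hb : 0 ≤ b) (hc : 0 ≤ c) :
    (a + b) ^ c ≤ 2 ^ c * (a ^ c + b ^ c) := by
  have h1 : a + b ≤ 2 * max a b := by
    rcases max_cases a b with ⟨h, h'⟩ | ⟨h, h'⟩ <;> rw [h] <;> linarith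
  have h2 : (a + b) ^ c ≤ (2 * max a b) ^ c :=
    Real.rpow_le_rpow (by linarith) h1 hc
  have h3 : (2 * max a b) ^ c = 2 ^ c * (max a b) ^ c :=
    Real.mul_rpow (by norm_num) (le_max_of_le_left ha)
  have h4 : (max a b) ^ c ≤ a ^ c + b ^ c := by
    rcases max_cases a b with ⟨h, h'⟩ | ⟨h, h'⟩ <;> rw [h]
    · nlinarith [Real.rpow_nonneg hb c]
    · nlinarith [Real.rpow_nonneg ha c]
  have h5 : (0:ℝ) ≤ (2:ℝ) ^ c := Real.rpow_nonneg (by norm_num) c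
  calc (a + b) ^ c ≤ 2 ^ c * (max a b) ^ c := h3 ▸ h2
    _ ≤ 2 ^ c * (a ^ c + b ^ c) := by nlinarith

private lemma hasDerivAt_abs_rpow_mul' {c : ℝ} (hc : 0 < c) (y : ℝ) :
    HasDerivAt (fun y : ℝ => |y| ^ c * y) ((c + 1) * |y| ^ c) y := by
  rcases eq_or_ne y 0 with rfl | hy
  · rw [hasDerivAt_iff_tendsto_slope]
    have heq : ∀ᶠ h in nhdsWithin (0:ℝ) {(0:ℝ)}ᶜ,
        |h| ^ c = slope (fun y : ℝ => |y| ^ c * y) 0 h := by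
      filter_upwards [self_mem_nhdsWithin] with h hh
      have hh' : (h : ℝ) ≠ 0 := hh
      rw [slope_def_field]
      field_simp
      simp
    have h1 : ContinuousAt (fun z : ℝ => z ^ c) |(0:ℝ)| := by
      rw [abs_zero]; exact Real.continuousAt_rpow_const 0 c (Or.inr hc.le)
    have hcont := h1.comp (continuous_abs.continuousAt (x := (0:ℝ)))
    have h0 : Tendsto (fun h : ℝ => |h| ^ c) (nhds (0:ℝ)) (nhds ((c + 1) * |(0:ℝ)| ^ c)) := by
      simpa [Function.comp_def, Real.zero_rpow hc.ne'] using hcont.tendsto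
    exact (h0.mono_left nhdsWithin_le_nhds).congr' heq
  · have hsq : (y : ℝ) ^ 2 ≠ 0 := pow_ne_zero 2 hy
    have hpos : (0:ℝ) < y ^ 2 := lt_of_le_of_ne (sq_nonneg y) (Ne.symm hsq)
    have h3 : HasDerivAt (fun y : ℝ => y ^ 2) (2 * y) y := by simpa using hasDerivAt_pow 2 y
    have h1 : HasDerivAt (fun y : ℝ => ((y : ℝ) ^ 2) ^ (c / 2))
        (c / 2 * (y ^ 2) ^ (c / 2 - 1) * (2 * y)) y := by
      have := h3.rpow_const (p := c / 2) (Or.inl hsq)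
      convert this using 1
      ring
    have h4 := h1.mul (hasDerivAt_id y)
    simp only [id_eq] at h4
    have e0 : (fun y : ℝ => ((y:ℝ) ^ 2) ^ (c / 2) * y) = fun y : ℝ => |y| ^ c * y := by
      funext z; rw [sq_rpow_half']
    rw [show ((fun y : ℝ => ((y:ℝ) ^ 2) ^ (c / 2)) * id) = fun y : ℝ => |y| ^ c * y from e0] at h4
    refine h4.congr_deriv ?_
    have e1 : ((y:ℝ) ^ 2) ^ (c / 2) = (y ^ 2) ^ (c / 2 - 1) * y ^ 2 := by
      have h5 := Real.rpow_add hpos (c / 2 - 1) 1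
      rw [Real.rpow_one] at h5
      calc ((y:ℝ) ^ 2) ^ (c / 2) = (y ^ 2) ^ (c / 2 - 1 + 1) := by norm_num
        _ = (y ^ 2) ^ (c / 2 - 1) * y ^ 2 := h5
    rw [← sq_rpow_half' y c, e1]
    ring

private lemma hasDerivAt_comp_affine' {g : ℝ → ℝ} {g' : ℝ → ℝ}
    (hg : ∀ y, HasDerivAt g (g' y) y) (c b t : ℝ) :
    HasDerivAt (fun t : ℝ => g (c + t * b)) (g' (c + t * b) * b) t := by
  have h1 : HasDerivAt (fun t : ℝ => c + t * b) b t := by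
    simpa using ((hasDerivAt_id t).mul_const b).const_add c
  exact HasDerivAt.comp t (hg (c + t * b)) h1

/-- the pointwise bound for the first-derivative integrand -/
private lemma bound_one {q co T w vv : ℝ} (hq : 2 < q) (hT : 0 ≤ T)
    (hw : |w| ≤ |co| + T * |vv|) :
    |w| ^ (q - 2) * |w| * |vv| ≤ 2 ^ (q - 1) * (|co| ^ (q - 1) * |vv| + T ^ (q - 1) * |vv| ^ q) := by
  have h1 : |w| ^ (q - 2) * |w| = |w| ^ (q - 1) := by
    have h := Real.rpow_add' (abs_nonneg w) (show (q - 2) + 1 ≠ 0 by intro h; nlinarith)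
    rw [Real.rpow_one] at h
    rw [← h]
    congr 1
    ring
  have h2 : |w| ^ (q - 1) ≤ (|co| + T * |vv|) ^ (q - 1) :=
    Real.rpow_le_rpow (abs_nonneg w) hw (by linarith)
  have h3 : (|co| + T * |vv|) ^ (q - 1) ≤ 2 ^ (q - 1) * (|co| ^ (q - 1) + (T * |vv|) ^ (q - 1)) :=
    rpow_add_le_two_rpow' (abs_nonneg co) (by positivity) (by linarith)
  have h4 : (T * |vv|) ^ (q - 1) = T ^ (q - 1) * |vv| ^ (q - 1) :=
    Real.mul_rpow hT (abs_nonneg vv)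
  have h5 : |vv| ^ (q - 1) * |vv| = |vv| ^ q := by
    have h := Real.rpow_add' (abs_nonneg vv) (show (q - 1) + 1 ≠ 0 by intro h; nlinarith)
    rw [Real.rpow_one] at h
    rw [← h]
    congr 1
    ring
  calc |w| ^ (q - 2) * |w| * |vv| = |w| ^ (q - 1) * |vv| := by rw [h1]
    _ ≤ (2 ^ (q - 1) * (|co| ^ (q - 1) + T ^ (q - 1) * |vv| ^ (q - 1))) * |vv| := by
        apply mul_le_mul_of_nonneg_right _ (abs_nonneg vv)
        rw [← h4]
        exact h2.trans h3
    _ = 2 ^ (q - 1) * (|co| ^ (q - 1) * |vv| + T ^ (q - 1) * (|vv| ^ (q - 1) * |vv|)) := by ring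
    _ = 2 ^ (q - 1) * (|co| ^ (q - 1) * |vv| + T ^ (q - 1) * |vv| ^ q) := by rw [h5]

/-- the pointwise bound for the second-derivative integrand -/
private lemma bound_two {q co T w vv : ℝ} (hq : 2 < q) (hT : 0 ≤ T)
    (hw : |w| ≤ |co| + T * |vv|) :
    |w| ^ (q - 2) * vv ^ 2 ≤ 2 ^ (q - 2) * (|co| ^ (q - 2) * vv ^ 2 + T ^ (q - 2) * |vv| ^ q) := by
  have h2 : |w| ^ (q - 2) ≤ (|co| + T * |vv|) ^ (q - 2) :=
    Real.rpow_le_rpow (abs_nonneg w) hw (by linarith)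
  have h3 : (|co| + T * |vv|) ^ (q - 2) ≤ 2 ^ (q - 2) * (|co| ^ (q - 2) + (T * |vv|) ^ (q - 2)) :=
    rpow_add_le_two_rpow' (abs_nonneg co) (by positivity) (by linarith)
  have h4 : (T * |vv|) ^ (q - 2) = T ^ (q - 2) * |vv| ^ (q - 2) :=
    Real.mul_rpow hT (abs_nonneg vv)
  have h5 : |vv| ^ (q - 2) * vv ^ 2 = |vv| ^ q := by
    have h := Real.rpow_add' (abs_nonneg vv) (show (q - 2) + 2 ≠ 0 by intro h; nlinarith)
    rw [show ((q - 2) + 2 : ℝ) = q by ring] at h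
    rw [h, ← sq_abs vv, ← Real.rpow_natCast |vv| 2]
    norm_num
  calc |w| ^ (q - 2) * vv ^ 2
      ≤ (2 ^ (q - 2) * (|co| ^ (q - 2) + T ^ (q - 2) * |vv| ^ (q - 2))) * vv ^ 2 := by
        apply mul_le_mul_of_nonneg_right _ (sq_nonneg vv)
        rw [← h4]
        exact h2.trans h3
    _ = 2 ^ (q - 2) * (|co| ^ (q - 2) * vv ^ 2 + T ^ (q - 2) * (|vv| ^ (q - 2) * vv ^ 2)) := by ring
    _ = 2 ^ (q - 2) * (|co| ^ (q - 2) * vv ^ 2 + T ^ (q - 2) * |vv| ^ q) := by rw [h5]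

private lemma core_ineq {α : Type*} [MeasurableSpace α] {μ : Measure α} [IsProbabilityMeasure μ]
    {q : ℝ} (hq : 2 < q) {v : α → ℝ} (hv : MemLp v (ENNReal.ofReal q) μ)
    (hmean : ∫ x, v x ∂μ = 0) {c : ℝ} (hc : c ≠ 0) :
    (∫ x, |c + v x| ^ q ∂μ) ^ (2 / q) ≤ |c| ^ 2 + (q - 1) * (∫ x, |v x| ^ q ∂μ) ^ (2 / q) := by
  have hq0 : (0:ℝ) < q := by linarith
  have hq1 : (1:ℝ≥0∞) ≤ ENNReal.ofReal q := by
    rw [ENNReal.one_le_ofReal]; linarith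
  have hqne : ENNReal.ofReal q ≠ 0 := by
    rw [Ne, ENNReal.ofReal_eq_zero]; push_neg; linarith
  have hvm : AEStronglyMeasurable v μ := hv.aestronglyMeasurable
  have hv_int : Integrable v μ := hv.integrable hq1
  have hvq_int : Integrable (fun a => |v a| ^ q) μ := by
    have := hv.integrable_norm_rpow hqne ENNReal.ofReal_ne_top
    simpa [Real.norm_eq_abs, ENNReal.toReal_ofReal hq0.le] using this
  have hv2 : MemLp v 2 μ := hv.mono_exponent (by
    rw [show (2:ℝ≥0∞) = ENNReal.ofReal 2 by norm_num]
    exact ENNReal.ofReal_le_ofReal hq.le)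
  have hv2_int : Integrable (fun a => v a ^ 2) μ := hv2.integrable_sq
  -- the path `t ↦ c + t*v`
  set W : ℝ → α → ℝ := fun t a => c + t * v a with hW
  have hw_mem : ∀ t, MemLp (W t) (ENNReal.ofReal q) μ := fun t =>
    (memLp_const c).add (hv.const_mul t)
  have hw_meas : ∀ t : ℝ, AEStronglyMeasurable (W t) μ := fun t => (hw_mem t).aestronglyMeasurable
  have hwq_int : ∀ t, Integrable (fun a => |W t a| ^ q) μ := fun t => by
    have := (hw_mem t).integrable_norm_rpow hqne ENNReal.ofReal_ne_top
    simpa [Real.norm_eq_abs, ENNReal.toReal_ofReal hq0.le] using this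
  have hw_avg : ∀ t, ∫ a, W t a ∂μ = c := fun t => by
    rw [hW]
    rw [integral_add (integrable_const c) (hv_int.const_mul t), integral_const,
      integral_const_mul, hmean]
    simp
  -- ψ and its positivity
  set ψ : ℝ → ℝ := fun t => ∫ a, |W t a| ^ q ∂μ with hψdef
  have hψ_nonneg : ∀ t, 0 ≤ ψ t := fun t =>
    integral_nonneg fun a => Real.rpow_nonneg (abs_nonneg _) q
  have hψ_pos : ∀ t, 0 < ψ t := by
    intro t
    rcases (hψ_nonneg t).lt_or_eq with h | h
    · exact h
    exfalso
    have h0 := (integral_eq_zero_iff_of_nonneg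
      (fun a => Real.rpow_nonneg (abs_nonneg _) q) (hwq_int t)).mp h.symm
    have hae : W t =ᵐ[μ] 0 := by
      filter_upwards [h0] with a ha
      have ha' : |W t a| ^ q = 0 := ha
      rw [Real.rpow_eq_zero_iff_of_nonneg (abs_nonneg _)] at ha'
      simpa [abs_eq_zero] using ha'.1
    have h2 := integral_congr_ae hae
    rw [hw_avg t] at h2
    simp at h2
    exact hc h2
  -- derivative integrands
  set F' : ℝ → α → ℝ := fun t a => q * |W t a| ^ (q - 2) * W t a * v a with hF'def
  set F'' : ℝ → α → ℝ := fun t a => q * ((q - 2 + 1) * |W t a| ^ (q - 2) * v a) * v a with hF''def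
  have habs_cont : Continuous fun x : ℝ => |x| ^ (q - 2) :=
    continuous_iff_continuousAt.mpr fun x =>
      (Real.continuousAt_rpow_const |x| (q - 2) (Or.inr (by linarith))).comp
        continuous_abs.continuousAt
  have hF'_meas : ∀ t, AEStronglyMeasurable (F' t) μ := fun t =>
    (((habs_cont.comp_aestronglyMeasurable (hw_meas t)).const_mul q).mul (hw_meas t)).mul hvm
  have hF''_meas : ∀ t, AEStronglyMeasurable (F'' t) μ := fun t => by
    apply AEStronglyMeasurable.mul _ hvm
    exact (((habs_cont.comp_aestronglyMeasurable (hw_meas t)).const_mul (q - 2 + 1)).mul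
      hvm).const_mul q
  have hF'_deriv : ∀ a t, HasDerivAt (fun t => |W t a| ^ q) (F' t a) t := by
    intro a t
    have := hasDerivAt_comp_affine' (g := fun y : ℝ => |y| ^ q)
      (g' := fun y : ℝ => q * |y| ^ (q - 2) * y)
      (fun y => hasDerivAt_abs_rpow y (by linarith)) c (v a) t
    exact this
  have hF''_deriv : ∀ a t, HasDerivAt (fun t => F' t a) (F'' t a) t := by
    intro a t
    have base := hasDerivAt_comp_affine' (g := fun y : ℝ => |y| ^ (q - 2) * y)
      (g' := fun y : ℝ => (q - 2 + 1) * |y| ^ (q - 2))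
      (fun y => hasDerivAt_abs_rpow_mul' (by linarith) y) c (v a) t
    have h5 := (base.const_mul q).mul_const (v a)
    have e : (fun t => q * (|W t a| ^ (q - 2) * W t a) * v a) = fun t => F' t a := by
      funext s
      rw [hF'def, hW]
      ring
    rw [e] at h5
    convert h5 using 1
  -- uniform local bounds and differentiation under the integral
  have hmain1 : ∀ t₀ : ℝ, Integrable (F' t₀) μ ∧
      HasDerivAt (fun t => ∫ a, |W t a| ^ q ∂μ) (∫ a, F' t₀ a ∂μ) t₀ := by
    intro t₀
    set T : ℝ := |t₀| + 1 with hT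
    have hT0 : (0:ℝ) ≤ T := by positivity
    refine hasDerivAt_integral_of_dominated_loc_of_deriv_le (s := Metric.ball t₀ 1) (Metric.ball_mem_nhds t₀ one_pos)
      (Eventually.of_forall fun t => (hwq_int t).aestronglyMeasurable)
      (hwq_int t₀) (hF'_meas t₀)
      (bound := fun a => q * 2 ^ (q - 1) * (|c| ^ (q - 1) * |v a| + T ^ (q - 1) * |v a| ^ q))
      ?_ ?_ ?_
    · refine Eventually.of_forall fun a => fun t ht => ?_
      have htT : |t| ≤ T := by
        rw [Metric.mem_ball, Real.dist_eq] at ht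
        rw [hT]
        have := abs_sub_abs_le_abs_sub t t₀
        linarith
      have hwb : |W t a| ≤ |c| + T * |v a| := by
        rw [hW]
        refine (abs_add_le c (t * v a)).trans ?_
        rw [abs_mul]
        have : |t| * |v a| ≤ T * |v a| := mul_le_mul_of_nonneg_right htT (abs_nonneg _)
        linarith
      have key := bound_one hq hT0 hwb
      rw [Real.norm_eq_abs, hF'def]
      calc |q * |W t a| ^ (q - 2) * W t a * v a|
          = q * (|W t a| ^ (q - 2) * |W t a| * |v a|) := by
            rw [abs_mul, abs_mul, abs_mul, abs_of_nonneg hq0.le,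
              abs_of_nonneg (Real.rpow_nonneg (abs_nonneg _) _)]
            ring
        _ ≤ q * (2 ^ (q - 1) * (|c| ^ (q - 1) * |v a| + T ^ (q - 1) * |v a| ^ q)) :=
            mul_le_mul_of_nonneg_left key hq0.le
        _ = q * 2 ^ (q - 1) * (|c| ^ (q - 1) * |v a| + T ^ (q - 1) * |v a| ^ q) := by ring
    · exact (((hv_int.abs.const_mul (|c| ^ (q - 1))).add
        (hvq_int.const_mul (T ^ (q - 1)))).const_mul (q * 2 ^ (q - 1)))
    · exact Eventually.of_forall fun a => fun t _ => hF'_deriv a t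
  have hmain2 : ∀ t₀ : ℝ, Integrable (F'' t₀) μ ∧
      HasDerivAt (fun t => ∫ a, F' t a ∂μ) (∫ a, F'' t₀ a ∂μ) t₀ := by
    intro t₀
    set T : ℝ := |t₀| + 1 with hT
    have hT0 : (0:ℝ) ≤ T := by positivity
    refine hasDerivAt_integral_of_dominated_loc_of_deriv_le (s := Metric.ball t₀ 1) (Metric.ball_mem_nhds t₀ one_pos)
      (Eventually.of_forall fun t => hF'_meas t)
      (hmain1 t₀).1 (hF''_meas t₀)
      (bound := fun a => q * (q - 1) * 2 ^ (q - 2) *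
        (|c| ^ (q - 2) * v a ^ 2 + T ^ (q - 2) * |v a| ^ q))
      ?_ ?_ ?_
    · refine Eventually.of_forall fun a => fun t ht => ?_
      have htT : |t| ≤ T := by
        rw [Metric.mem_ball, Real.dist_eq] at ht
        rw [hT]
        have := abs_sub_abs_le_abs_sub t t₀
        linarith
      have hwb : |W t a| ≤ |c| + T * |v a| := by
        rw [hW]
        refine (abs_add_le c (t * v a)).trans ?_
        rw [abs_mul]
        have : |t| * |v a| ≤ T * |v a| := mul_le_mul_of_nonneg_right htT (abs_nonneg _)
        linarith
      have key := bound_two hq hT0 hwb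
      rw [Real.norm_eq_abs, hF''def]
      calc |q * ((q - 2 + 1) * |W t a| ^ (q - 2) * v a) * v a|
          = q * (q - 1) * (|W t a| ^ (q - 2) * v a ^ 2) := by
            rw [abs_mul, abs_mul, abs_mul, abs_mul, abs_of_nonneg hq0.le,
              abs_of_nonneg (show (0:ℝ) ≤ q - 2 + 1 by linarith),
              abs_of_nonneg (Real.rpow_nonneg (abs_nonneg _) _)]
            rw [show (q - 2 + 1 : ℝ) = q - 1 by ring, ← sq_abs (v a)]
            ring
        _ ≤ q * (q - 1) * (2 ^ (q - 2) * (|c| ^ (q - 2) * v a ^ 2 + T ^ (q - 2) * |v a| ^ q)) := by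
            apply mul_le_mul_of_nonneg_left key
            nlinarith
        _ = q * (q - 1) * 2 ^ (q - 2) *
            (|c| ^ (q - 2) * v a ^ 2 + T ^ (q - 2) * |v a| ^ q) := by ring
    · exact (((hv2_int.const_mul (|c| ^ (q - 2))).add
        (hvq_int.const_mul (T ^ (q - 2)))).const_mul (q * (q - 1) * 2 ^ (q - 2)))
    · exact Eventually.of_forall fun a => fun t _ => hF''_deriv a t
  -- first and second derivative functions of ψ
  set ψ' : ℝ → ℝ := fun t => ∫ a, F' t a ∂μ with hψ'def
  set ψ'' : ℝ → ℝ := fun t => ∫ a, F'' t a ∂μ with hψ''def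
  have hψd : ∀ t, HasDerivAt ψ (ψ' t) t := fun t => (hmain1 t).2
  have hψ'd : ∀ t, HasDerivAt ψ' (ψ'' t) t := fun t => (hmain2 t).2
  set N2 : ℝ := (∫ a, |v a| ^ q ∂μ) ^ (2 / q) with hN2def
  have hN2_nonneg : 0 ≤ N2 :=
    Real.rpow_nonneg (integral_nonneg fun a => Real.rpow_nonneg (abs_nonneg _) q) _
  -- Hölder estimate for ψ''
  have hψ''_le : ∀ t, ψ'' t ≤ q * (q - 1) * (ψ t ^ (1 - 2 / q) * N2) := by
    intro t
    have hstep : ψ'' t = q * (q - 1) * ∫ a, |W t a| ^ (q - 2) * v a ^ 2 ∂μ := by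
      calc ψ'' t = ∫ a, (q * (q - 1)) * (|W t a| ^ (q - 2) * v a ^ 2) ∂μ :=
            integral_congr_ae (Eventually.of_forall fun a => by
              show F'' t a = _
              simp only [hF''def]
              ring)
        _ = q * (q - 1) * ∫ a, |W t a| ^ (q - 2) * v a ^ 2 ∂μ := integral_const_mul _ _
    have hpq : Real.HolderConjugate (q / (q - 2)) (q / 2) := by
      rw [Real.holderConjugate_iff]
      constructor
      · rw [lt_div_iff₀ (by linarith : (0:ℝ) < q - 2)]; linarith
      · field_simp
        ring
    have hfmem : MemLp (fun a => |W t a| ^ (q - 2)) (ENNReal.ofReal (q / (q - 2))) μ := by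
      have h := (hw_mem t).norm_rpow_div (ENNReal.ofReal (q - 2))
      rw [ENNReal.toReal_ofReal (by linarith : (0:ℝ) ≤ q - 2)] at h
      rw [ENNReal.ofReal_div_of_pos (by linarith : (0:ℝ) < q - 2)]
      simpa [Real.norm_eq_abs] using h
    have hgmem : MemLp (fun a => v a ^ 2) (ENNReal.ofReal (q / 2)) μ := by
      have h := hv.norm_rpow_div (ENNReal.ofReal 2)
      rw [ENNReal.toReal_ofReal (by norm_num : (0:ℝ) ≤ 2)] at h
      have e : (fun a => ‖v a‖ ^ (2:ℝ)) = fun a => v a ^ 2 := by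
        funext a
        rw [Real.norm_eq_abs, show ((2:ℝ)) = ((2:ℕ):ℝ) by norm_num, Real.rpow_natCast, sq_abs]
      rw [e] at h
      rw [ENNReal.ofReal_div_of_pos (by norm_num : (0:ℝ) < 2)]
      have e2 : ENNReal.ofReal 2 = (2:ℝ≥0∞) := by norm_num
      rw [e2]
      rw [e2] at h
      exact h
    have hH := integral_mul_le_Lp_mul_Lq_of_nonneg hpq
      (Eventually.of_forall fun a => Real.rpow_nonneg (abs_nonneg _) _)
      (Eventually.of_forall fun a => sq_nonneg _) hfmem hgmem
    have i1 : ∫ a, (|W t a| ^ (q - 2)) ^ (q / (q - 2)) ∂μ = ψ t := by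
      refine integral_congr_ae (Eventually.of_forall fun a => ?_)
      show (|W t a| ^ (q - 2)) ^ (q / (q - 2)) = |W t a| ^ q
      rw [← Real.rpow_mul (abs_nonneg (W t a))]
      congr 1
      field_simp [show q - 2 ≠ 0 by linarith]
    have i2 : ∫ a, (v a ^ 2) ^ (q / 2) ∂μ = ∫ a, |v a| ^ q ∂μ := by
      refine integral_congr_ae (Eventually.of_forall fun a => ?_)
      show (v a ^ 2) ^ (q / 2) = |v a| ^ q
      exact sq_rpow_half' (v a) q
    rw [i1, i2] at hH
    have e3 : (1:ℝ) / (q / (q - 2)) = 1 - 2 / q := by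
      field_simp
    have e4 : (1:ℝ) / (q / 2) = 2 / q := by
      rw [one_div_div]
    rw [e3, e4] at hH
    have hHolder : ∫ a, |W t a| ^ (q - 2) * v a ^ 2 ∂μ ≤ ψ t ^ (1 - 2 / q) * N2 := by
      rw [hN2def]
      exact hH
    rw [hstep]
    apply mul_le_mul_of_nonneg_left hHolder
    nlinarith
  -- ψ'(0) = 0
  have hψ'0 : ψ' 0 = 0 := by
    calc ψ' 0 = ∫ a, (q * |c| ^ (q - 2) * c) * v a ∂μ := by
          refine integral_congr_ae (Eventually.of_forall fun a => ?_)
          show F' 0 a = _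
          simp only [hF'def, hW]
          norm_num
      _ = (q * |c| ^ (q - 2) * c) * ∫ a, v a ∂μ := integral_const_mul _ _
      _ = 0 := by rw [hmean]; ring
  -- derivatives of G and G'
  have hGd : ∀ t, HasDerivAt (fun s => ψ s ^ (2 / q) - (q - 1) * N2 * s ^ 2)
      (ψ' t * (2 / q) * ψ t ^ (2 / q - 1) - (q - 1) * N2 * (2 * t)) t := by
    intro t
    apply HasDerivAt.sub
    · exact (hψd t).rpow_const (Or.inl (hψ_pos t).ne')
    · have := (hasDerivAt_pow 2 t).const_mul ((q - 1) * N2)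
      refine this.congr_deriv ?_
      push_cast
      ring
  have hG'd : ∀ t, HasDerivAt (fun s => ψ' s * (2 / q) * ψ s ^ (2 / q - 1) - (q - 1) * N2 * (2 * s))
      ((ψ'' t * (2 / q)) * ψ t ^ (2 / q - 1)
        + (ψ' t * (2 / q)) * (ψ' t * (2 / q - 1) * ψ t ^ (2 / q - 1 - 1))
        - (q - 1) * N2 * 2) t := by
    intro t
    apply HasDerivAt.sub
    · have h1 : HasDerivAt (fun s => ψ' s * (2 / q)) (ψ'' t * (2 / q)) t := (hψ'd t).mul_const _
      have h2 : HasDerivAt (fun s => ψ s ^ (2 / q - 1))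
          (ψ' t * (2 / q - 1) * ψ t ^ (2 / q - 1 - 1)) t :=
        (hψd t).rpow_const (Or.inl (hψ_pos t).ne')
      exact h1.mul h2
    · have h8 := (hasDerivAt_id t).const_mul ((q - 1) * N2 * 2)
      simp only [id_eq, mul_one] at h8
      have h7 : HasDerivAt (fun s : ℝ => (q - 1) * N2 * (2 * s)) ((q - 1) * N2 * 2) t := by
        have e : (fun s : ℝ => (q - 1) * N2 * (2 * s)) = fun y => (q - 1) * N2 * 2 * y := by
          funext s; ring
        rw [e]; exact h8
      exact h7
  -- G'' ≤ 0
  have hG''_nonpos : ∀ t,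
      (ψ'' t * (2 / q)) * ψ t ^ (2 / q - 1)
        + (ψ' t * (2 / q)) * (ψ' t * (2 / q - 1) * ψ t ^ (2 / q - 1 - 1))
        - (q - 1) * N2 * 2 ≤ 0 := by
    intro t
    have hk0 : (0:ℝ) < 2 / q := by positivity
    have hk1 : 2 / q ≤ 1 := by
      rw [div_le_one hq0]; linarith
    have hX : (0:ℝ) ≤ ψ t ^ (2 / q - 1 - 1) := Real.rpow_nonneg (hψ_nonneg t) _
    have hterm2 : (ψ' t * (2 / q)) * (ψ' t * (2 / q - 1) * ψ t ^ (2 / q - 1 - 1)) ≤ 0 := by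
      have hfin : 0 ≤ (2 / q) * ((1 - 2 / q) * ((ψ' t) ^ 2 * ψ t ^ (2 / q - 1 - 1))) :=
        mul_nonneg hk0.le (mul_nonneg (by linarith) (mul_nonneg (sq_nonneg _) hX))
      nlinarith [hfin]
    have hterm1 : (ψ'' t * (2 / q)) * ψ t ^ (2 / q - 1) ≤ 2 * (q - 1) * N2 := by
      have hmulpos : (0:ℝ) ≤ (2 / q) * ψ t ^ (2 / q - 1) :=
        mul_nonneg hk0.le (Real.rpow_nonneg (hψ_nonneg t) _)
      have h1 : (ψ'' t * (2 / q)) * ψ t ^ (2 / q - 1)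
          = ψ'' t * ((2 / q) * ψ t ^ (2 / q - 1)) := by ring
      have h2 : ψ'' t * ((2 / q) * ψ t ^ (2 / q - 1))
          ≤ (q * (q - 1) * (ψ t ^ (1 - 2 / q) * N2)) * ((2 / q) * ψ t ^ (2 / q - 1)) :=
        mul_le_mul_of_nonneg_right (hψ''_le t) hmulpos
      have hψψ : ψ t ^ (1 - 2 / q) * ψ t ^ (2 / q - 1) = 1 := by
        rw [← Real.rpow_add (hψ_pos t)]
        norm_num
      have h3 : (q * (q - 1) * (ψ t ^ (1 - 2 / q) * N2)) * ((2 / q) * ψ t ^ (2 / q - 1))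
          = (q * (2 / q)) * (q - 1) * N2 * (ψ t ^ (1 - 2 / q) * ψ t ^ (2 / q - 1)) := by ring
      have h4 : (q * (2 / q) : ℝ) = 2 := by field_simp
      rw [h1]
      calc ψ'' t * ((2 / q) * ψ t ^ (2 / q - 1))
          ≤ (q * (q - 1) * (ψ t ^ (1 - 2 / q) * N2)) * ((2 / q) * ψ t ^ (2 / q - 1)) := h2
        _ = (q * (2 / q)) * (q - 1) * N2 * (ψ t ^ (1 - 2 / q) * ψ t ^ (2 / q - 1)) := h3
        _ = 2 * (q - 1) * N2 := by rw [h4, hψψ]; ring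
    linarith
  -- G' is antitone on [0,1], G'(0) = 0, hence G' ≤ 0 there
  have hG'cont : Continuous (fun s => ψ' s * (2 / q) * ψ s ^ (2 / q - 1) - (q - 1) * N2 * (2 * s)) :=
    continuous_iff_continuousAt.mpr fun t => (hG'd t).continuousAt
  have hG'anti : AntitoneOn (fun s => ψ' s * (2 / q) * ψ s ^ (2 / q - 1) - (q - 1) * N2 * (2 * s))
      (Set.Icc 0 1) := by
    refine antitoneOn_of_deriv_nonpos (convex_Icc 0 1) hG'cont.continuousOn
      (fun x _ => (hG'd x).differentiableAt.differentiableWithinAt) (fun x _ => ?_)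
    rw [(hG'd x).deriv]
    exact hG''_nonpos x
  have hG'0 : ψ' 0 * (2 / q) * ψ 0 ^ (2 / q - 1) - (q - 1) * N2 * (2 * 0) = 0 := by
    rw [hψ'0]; ring
  have hG'np : ∀ t ∈ Set.Icc (0:ℝ) 1,
      ψ' t * (2 / q) * ψ t ^ (2 / q - 1) - (q - 1) * N2 * (2 * t) ≤ 0 := by
    intro t ht
    calc ψ' t * (2 / q) * ψ t ^ (2 / q - 1) - (q - 1) * N2 * (2 * t)
        ≤ ψ' 0 * (2 / q) * ψ 0 ^ (2 / q - 1) - (q - 1) * N2 * (2 * 0) :=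
          hG'anti (Set.left_mem_Icc.mpr zero_le_one) ht ht.1
      _ = 0 := hG'0
  -- G is antitone on [0,1]
  have hGcont : Continuous (fun s => ψ s ^ (2 / q) - (q - 1) * N2 * s ^ 2) :=
    continuous_iff_continuousAt.mpr fun t => (hGd t).continuousAt
  have hGanti : AntitoneOn (fun s => ψ s ^ (2 / q) - (q - 1) * N2 * s ^ 2) (Set.Icc 0 1) := by
    refine antitoneOn_of_deriv_nonpos (convex_Icc 0 1) hGcont.continuousOn
      (fun x _ => (hGd x).differentiableAt.differentiableWithinAt) (fun x hx => ?_)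
    rw [(hGd x).deriv]
    rw [interior_Icc] at hx
    exact hG'np x (Set.Ioo_subset_Icc_self hx)
  have hfinal : ψ 1 ^ (2 / q) - (q - 1) * N2 * 1 ^ 2 ≤ ψ 0 ^ (2 / q) - (q - 1) * N2 * 0 ^ 2 :=
    hGanti (Set.left_mem_Icc.mpr zero_le_one) (Set.right_mem_Icc.mpr zero_le_one) zero_le_one
  -- unfold everything
  have hψ1 : ψ 1 = ∫ x, |c + v x| ^ q ∂μ := by
    refine integral_congr_ae (Eventually.of_forall fun a => ?_)
    show |W 1 a| ^ q = _
    rw [hW]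
    norm_num
  have hψ0 : ψ 0 = |c| ^ q := by
    have : ψ 0 = ∫ a, |c| ^ q ∂μ := by
      refine integral_congr_ae (Eventually.of_forall fun a => ?_)
      show |W 0 a| ^ q = _
      rw [hW]
      norm_num
    rw [this, integral_const]
    simp
  have hc2 : (|c| ^ q) ^ (2 / q) = |c| ^ 2 := by
    rw [← Real.rpow_mul (abs_nonneg c)]
    rw [show q * (2 / q) = (2:ℝ) by field_simp]
    rw [show ((2:ℝ)) = ((2:ℕ):ℝ) by norm_num, Real.rpow_natCast]
  rw [hψ1, hψ0, hc2] at hfinal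
  have hgoal := hfinal
  nlinarith [hN2_nonneg]


/-- **Remark 2.** For `q ∈ (2,∞)` and `u ∈ L^q(μ)` with mean `ū`,
`(∫|u|^q dμ)^{2/q} ≤ |ū|² + (q−1)(∫|u−ū|^q dμ)^{2/q}`. -/
theorem mean_moment_upper_bound_q_gt_two
    (d : ℕ) (μ : Measure (Ed d)) (hμ : IsProbabilityMeasure μ)
    (q : ℝ) (hq : q ∈ Set.Ioi (2 : ℝ))
    (u : Ed d → ℝ) (huq : MemLp u (ENNReal.ofReal q) μ)
    (ubar : ℝ) (hubar : ubar = ∫ x, u x ∂μ) :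
    (∫ x, |u x| ^ q ∂μ) ^ (2 / q)
      ≤ |ubar| ^ 2 + (q - 1) * (∫ x, |u x - ubar| ^ q ∂μ) ^ (2 / q) := by
  have hq' : (2:ℝ) < q := hq
  have hq1 : (1:ℝ≥0∞) ≤ ENNReal.ofReal q := by
    rw [ENNReal.one_le_ofReal]; linarith
  have hu_int : Integrable u μ := huq.integrable hq1
  have hv : MemLp (fun x => u x - ubar) (ENNReal.ofReal q) μ := huq.sub (memLp_const ubar)
  have hmean : ∫ x, (u x - ubar) ∂μ = 0 := by
    rw [integral_sub hu_int (integrable_const ubar), integral_const]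
    simp [hubar]
  rcases eq_or_ne ubar 0 with h0 | h0
  · rw [h0]
    simp only [sub_zero, abs_zero]
    have hA : (0:ℝ) ≤ (∫ x, |u x| ^ q ∂μ) ^ (2 / q) :=
      Real.rpow_nonneg
        (integral_nonneg fun x => Real.rpow_nonneg (abs_nonneg _) q) _
    nlinarith [hA]
  · have key := core_ineq (μ := μ) hq' hv hmean h0
    have e : ∫ x, |ubar + (u x - ubar)| ^ q ∂μ = ∫ x, |u x| ^ q ∂μ := by
      refine integral_congr_ae (Filter.Eventually.of_forall fun x => ?_)
      show |ubar + (u x - ubar)| ^ q = |u x| ^ q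
      rw [show ubar + (u x - ubar) = u x by ring]
    rw [e] at key
    exact key
end
end

section
/- Let μ be a probability measure on ℝ^d, p ∈ (1, 2], and suppose μ satisfies the generalized Poincaré inequality with constant C, i.e. (1/(p-1)) [∫|u|² dμ − (∫|u|^{2/p} dμ)^p] ≤ C ∫|∇u|² dμ for all u ∈ H¹(μ). Then μ satisfies the Poincaré (spectral gap) inequality with constant (p/2)·C, i.e. ∫|u − ū|² dμ ≤ (p/2)·C ∫|∇u|² dμ for all u ∈ H¹(μ), where ū = ∫u dμ. Equivalently, the optimal constants satisfy C_p(μ) ≥ (2/p) C₂(μ). -/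
open MeasureTheory Real Filter Topology Set
open scoped ENNReal RealInnerProductSpace

noncomputable section

section AuxLemmas


/-- Second-order Taylor limit for `t ↦ (1+t)^a` at `0`. -/
lemma tendsto_taylor2 {a : ℝ} :
    Tendsto (fun t : ℝ => ((1 + t) ^ a - 1 - a * t) / t ^ 2) (𝓝[≠] (0:ℝ))
      (𝓝 (a * (a - 1) / 2)) := by
  have hmem : ∀ᶠ t : ℝ in 𝓝 (0:ℝ), (0:ℝ) < 1 + t := by
    have h : Tendsto (fun t : ℝ => 1 + t) (𝓝 (0:ℝ)) (𝓝 (1 + 0)) :=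
      (tendsto_id (α := ℝ)).const_add 1
    simp only [add_zero] at h
    exact h.eventually (eventually_gt_nhds one_pos)
  have hff' : ∀ᶠ t : ℝ in 𝓝[≠] (0:ℝ),
      HasDerivAt (fun t : ℝ => (1 + t) ^ a - 1 - a * t)
        (a * (1 + t) ^ (a - 1) - a) t := by
    filter_upwards [hmem.filter_mono nhdsWithin_le_nhds] with t ht
    have h1 : HasDerivAt (fun t : ℝ => 1 + t) 1 t := by
      simpa using (hasDerivAt_id t).const_add 1
    have h2 : HasDerivAt (fun t : ℝ => (1 + t) ^ a) (1 * a * (1 + t) ^ (a - 1)) t :=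
      h1.rpow_const (Or.inl ht.ne')
    have h3 : HasDerivAt (fun t : ℝ => a * t) a t := by
      simpa using (hasDerivAt_id t).const_mul a
    simpa [mul_comm, one_mul] using (h2.sub_const 1).fun_sub h3
  have hgg' : ∀ᶠ t : ℝ in 𝓝[≠] (0:ℝ), HasDerivAt (fun t : ℝ => t ^ 2) (2 * t) t := by
    filter_upwards with t
    simpa [mul_comm] using hasDerivAt_pow 2 t
  have hg' : ∀ᶠ t : ℝ in 𝓝[≠] (0:ℝ), 2 * t ≠ 0 := by
    filter_upwards [self_mem_nhdsWithin] with t ht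
    exact mul_ne_zero two_ne_zero ht
  have hfa : Tendsto (fun t : ℝ => (1 + t) ^ a - 1 - a * t) (𝓝 (0:ℝ)) (𝓝 0) := by
    have hc : ContinuousAt (fun t : ℝ => (1 + t) ^ a) 0 := by
      apply ContinuousAt.rpow_const (by fun_prop)
      left; norm_num
    have hc2 : ContinuousAt (fun t : ℝ => (1 + t) ^ a - 1 - a * t) 0 := by fun_prop
    have := hc2.tendsto
    simpa using this
  have hga : Tendsto (fun t : ℝ => t ^ 2) (𝓝 (0:ℝ)) (𝓝 0) := by
    simpa using (continuous_pow 2).tendsto (0:ℝ)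
  have hslope : Tendsto (fun t : ℝ => ((1 + t) ^ (a - 1) - 1) / t) (𝓝[≠] (0:ℝ))
      (𝓝 (a - 1)) := by
    have h1 : HasDerivAt (fun t : ℝ => 1 + t) 1 (0:ℝ) := by
      simpa using (hasDerivAt_id (0:ℝ)).const_add 1
    have h2 : HasDerivAt (fun t : ℝ => (1 + t) ^ (a - 1))
        (1 * (a-1) * (1 + (0:ℝ)) ^ (a - 1 - 1)) 0 :=
      h1.rpow_const (Or.inl (by norm_num))
    have h2' : HasDerivAt (fun t : ℝ => (1 + t) ^ (a - 1)) (a - 1) 0 := by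
      simpa using h2
    have h3 := hasDerivAt_iff_tendsto_slope.mp h2'
    refine h3.congr' ?_
    filter_upwards [self_mem_nhdsWithin] with t ht
    simp [slope_def_field]
  have hdiv : Tendsto (fun t : ℝ => (a * (1 + t) ^ (a - 1) - a) / (2 * t)) (𝓝[≠] (0:ℝ))
      (𝓝 (a * (a - 1) / 2)) := by
    have h : Tendsto (fun t : ℝ => (a / 2) * (((1 + t) ^ (a - 1) - 1) / t)) (𝓝[≠] (0:ℝ))
        (𝓝 ((a / 2) * (a - 1))) := hslope.const_mul _
    have heq : (fun t : ℝ => (a / 2) * (((1 + t) ^ (a - 1) - 1) / t))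
        = fun t : ℝ => (a * (1 + t) ^ (a - 1) - a) / (2 * t) := by
      funext t; ring
    rw [heq] at h
    convert h using 2
    ring
  exact HasDerivAt.lhopital_zero_nhdsNE hff' hgg' hg'
    (hfa.mono_left nhdsWithin_le_nhds) (hga.mono_left nhdsWithin_le_nhds) hdiv


/-- abs version -/
lemma tendsto_taylor2_abs {a : ℝ} :
    Tendsto (fun t : ℝ => (|1 + t| ^ a - 1 - a * t) / t ^ 2) (𝓝[≠] (0:ℝ))
      (𝓝 (a * (a - 1) / 2)) := by
  refine tendsto_taylor2.congr' ?_
  have hmem : ∀ᶠ t : ℝ in 𝓝 (0:ℝ), (0:ℝ) < 1 + t := by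
    have h : Tendsto (fun t : ℝ => 1 + t) (𝓝 (0:ℝ)) (𝓝 (1 + 0)) :=
      (tendsto_id (α := ℝ)).const_add 1
    simp only [add_zero] at h
    exact h.eventually (eventually_gt_nhds one_pos)
  filter_upwards [hmem.filter_mono nhdsWithin_le_nhds] with t ht
  rw [abs_of_pos ht]

/-- the ratio function, with its limit value at `0`. -/
noncomputable def Gfun (a : ℝ) (s : ℝ) : ℝ :=
  if s = 0 then a * (a - 1) / 2 else ((1 + s) ^ a - 1 - a * s) / s ^ 2

lemma Gfun_identity (a : ℝ) (s : ℝ) :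
    (1 + s) ^ a = 1 + a * s + s ^ 2 * Gfun a s := by
  rcases eq_or_ne s 0 with h | h
  · simp [Gfun, h]
  · rw [Gfun, if_neg h]
    field_simp
    ring

lemma tendsto_Gfun (a : ℝ) : Tendsto (Gfun a) (𝓝 (0:ℝ)) (𝓝 (a * (a - 1) / 2)) := by
  rw [← nhdsNE_sup_pure (0:ℝ)]
  rw [Filter.tendsto_sup]
  constructor
  · refine tendsto_taylor2.congr' ?_
    filter_upwards [self_mem_nhdsWithin] with t ht
    have ht' : t ≠ 0 := ht
    rw [Gfun, if_neg ht']
  · rw [tendsto_pure_left]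
    intro s hs
    simpa [Gfun] using mem_of_mem_nhds hs


lemma abs_le_of_mem_uIcc {t y : ℝ} (hy : y ∈ uIcc (0:ℝ) t) : |y| ≤ |t| := by
  rcases le_total 0 t with h | h
  · rw [uIcc_of_le h] at hy
    rw [abs_of_nonneg hy.1, abs_of_nonneg h]; exact hy.2
  · rw [uIcc_of_ge h] at hy
    rw [abs_of_nonpos (le_trans hy.2 le_rfl), abs_of_nonpos h]; linarith [hy.1]

lemma rpow_base_bound {b : ℝ} (hb1 : -1 ≤ b) (hb2 : b ≤ 0) {x : ℝ} (hx : 1/2 ≤ x) :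
    x ^ b ≤ 2 := by
  have hx0 : (0:ℝ) < x := lt_of_lt_of_le (by norm_num) hx
  rcases le_or_gt 1 x with h | h
  · calc x ^ b ≤ 1 := Real.rpow_le_one_of_one_le_of_nonpos h hb2
    _ ≤ 2 := by norm_num
  · calc x ^ b ≤ x ^ (-1 : ℝ) := Real.rpow_le_rpow_of_exponent_ge hx0 h.le hb1
    _ = x⁻¹ := by rw [Real.rpow_neg_one]
    _ ≤ 2 := by
        rw [inv_le_comm₀ hx0 (by norm_num)]
        linarith

/-- |(1+x)^(a-1) - 1| ≤ 2|x| for |x| ≤ 1/2, 1 ≤ a ≤ 2 -/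
lemma inner_bound {a : ℝ} (ha1 : 1 ≤ a) (ha2 : a ≤ 2) {x : ℝ} (hx : |x| ≤ 1/2) :
    |(1 + x) ^ (a - 1) - 1| ≤ 2 * |x| := by
  have key : ∀ y ∈ uIcc (0:ℝ) x,
      HasDerivWithinAt (fun s : ℝ => (1 + s) ^ (a - 1))
        ((a - 1) * (1 + y) ^ (a - 2)) (uIcc (0:ℝ) x) y := by
    intro y hy
    have hy' : |y| ≤ 1/2 := le_trans (abs_le_of_mem_uIcc hy) hx
    have hpos : (0:ℝ) < 1 + y := by
      rcases abs_le.mp hy' with ⟨h1, _⟩; linarith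
    have h1 : HasDerivAt (fun s : ℝ => 1 + s) 1 y := by
      simpa using (hasDerivAt_id y).const_add 1
    have h2 : HasDerivAt (fun s : ℝ => (1 + s) ^ (a - 1))
        (1 * (a - 1) * (1 + y) ^ (a - 1 - 1)) y := h1.rpow_const (Or.inl hpos.ne')
    have h3 : HasDerivAt (fun s : ℝ => (1 + s) ^ (a - 1))
        ((a - 1) * (1 + y) ^ (a - 2)) y := by
      convert h2 using 1; ring_nf
    exact h3.hasDerivWithinAt
  have bound : ∀ y ∈ uIcc (0:ℝ) x, ‖(a - 1) * (1 + y) ^ (a - 2)‖ ≤ 2 := by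
    intro y hy
    have hy' : |y| ≤ 1/2 := le_trans (abs_le_of_mem_uIcc hy) hx
    have h12 : (1:ℝ)/2 ≤ 1 + y := by rcases abs_le.mp hy' with ⟨h1, _⟩; linarith
    have hb : (1 + y) ^ (a - 2) ≤ 2 := rpow_base_bound (by linarith) (by linarith) h12
    have hb0 : (0:ℝ) ≤ (1 + y) ^ (a - 2) := Real.rpow_nonneg (by linarith) _
    rw [Real.norm_eq_abs, abs_mul, abs_of_nonneg (by linarith : (0:ℝ) ≤ a - 1),
      abs_of_nonneg hb0]
    nlinarith
  have h := (convex_uIcc (0:ℝ) x).norm_image_sub_le_of_norm_hasDerivWithin_le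
    key bound (right_mem_uIcc) (left_mem_uIcc)
  rw [abs_sub_comm]
  simpa [Real.norm_eq_abs] using h

/-- global bound: | |1+t|^a - 1 - a t | ≤ 17 t² for 1 ≤ a ≤ 2. -/
lemma global_bound {a : ℝ} (ha1 : 1 ≤ a) (ha2 : a ≤ 2) (t : ℝ) :
    abs (|1 + t| ^ a - 1 - a * t) ≤ 17 * t ^ 2 := by
  rcases le_or_gt |t| (1/2) with hts | htl
  · -- small t
    have habs : |1 + t| = 1 + t := by
      rw [abs_of_pos]; rcases abs_le.mp hts with ⟨h1, _⟩; linarith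
    rw [habs]
    have key : ∀ y ∈ uIcc (0:ℝ) t,
        HasDerivWithinAt (fun s : ℝ => (1 + s) ^ a - 1 - a * s)
          (a * ((1 + y) ^ (a - 1) - 1)) (uIcc (0:ℝ) t) y := by
      intro y hy
      have hy' : |y| ≤ 1/2 := le_trans (abs_le_of_mem_uIcc hy) hts
      have hpos : (0:ℝ) < 1 + y := by
        rcases abs_le.mp hy' with ⟨h1, _⟩; linarith
      have h1 : HasDerivAt (fun s : ℝ => 1 + s) 1 y := by
        simpa using (hasDerivAt_id y).const_add 1
      have h2 : HasDerivAt (fun s : ℝ => (1 + s) ^ a)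
          (1 * a * (1 + y) ^ (a - 1)) y := h1.rpow_const (Or.inl hpos.ne')
      have h3 : HasDerivAt (fun s : ℝ => a * s) a y := by
        simpa using (hasDerivAt_id y).const_mul a
      have h4 := (h2.sub_const 1).fun_sub h3
      have h5 : HasDerivAt (fun s : ℝ => (1 + s) ^ a - 1 - a * s)
          (a * ((1 + y) ^ (a - 1) - 1)) y := by
        rw [show a * ((1 + y) ^ (a - 1) - 1) = 1 * a * (1 + y) ^ (a - 1) - a by ring]; exact h4
      exact h5.hasDerivWithinAt
    have bound : ∀ y ∈ uIcc (0:ℝ) t, ‖a * ((1 + y) ^ (a - 1) - 1)‖ ≤ 4 * |t| := by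
      intro y hy
      have hy' : |y| ≤ 1/2 := le_trans (abs_le_of_mem_uIcc hy) hts
      have hyt : |y| ≤ |t| := abs_le_of_mem_uIcc hy
      have hib : |(1 + y) ^ (a - 1) - 1| ≤ 2 * |y| := inner_bound ha1 ha2 hy'
      rw [Real.norm_eq_abs, abs_mul, abs_of_nonneg (by linarith : (0:ℝ) ≤ a)]
      nlinarith [abs_nonneg y, abs_nonneg t]
    have h := (convex_uIcc (0:ℝ) t).norm_image_sub_le_of_norm_hasDerivWithin_le
      key bound (right_mem_uIcc) (left_mem_uIcc)
    simp only [Real.norm_eq_abs] at h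
    have h2 : |(1 + t) ^ a - 1 - a * t| ≤ 4 * |t| * |t| := by
      have he : ((1:ℝ) + 0) ^ a - 1 - a * 0 = 0 := by simp
      rw [abs_sub_comm]
      simpa [he] using h
    have : |t| * |t| = t ^ 2 := by rw [← abs_mul, ← sq, abs_of_nonneg (sq_nonneg t)]
    nlinarith [sq_nonneg t]
  · -- large t
    have ht2 : (1:ℝ)/4 ≤ t ^ 2 := by nlinarith [sq_abs t]
    have htt : |t| ≤ 2 * t ^ 2 := by nlinarith [sq_abs t, abs_nonneg t]
    have h1 : |1 + t| ^ a ≤ 9 * t ^ 2 := by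
      have hb1 : |1 + t| ≤ 3 * |t| := by
        calc |1 + t| ≤ 1 + |t| := by simpa using abs_add_le 1 t
        _ ≤ 3 * |t| := by linarith
      have hb2 : |1 + t| ^ a ≤ (3 * |t|) ^ a :=
        Real.rpow_le_rpow (abs_nonneg _) hb1 (by linarith)
      have h3t : (1:ℝ) ≤ 3 * |t| := by linarith
      have hb3 : (3 * |t|) ^ a ≤ (3 * |t|) ^ (2:ℝ) :=
        Real.rpow_le_rpow_of_exponent_le h3t ha2
      have hb4 : (3 * |t|) ^ (2:ℝ) = 9 * t ^ 2 := by
        rw [show (2:ℝ) = ((2:ℕ):ℝ) by norm_num, Real.rpow_natCast]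
        rw [mul_pow, sq_abs]; norm_num
      linarith
    have h2 : |a * t| ≤ 4 * t ^ 2 := by
      rw [abs_mul, abs_of_nonneg (by linarith : (0:ℝ) ≤ a)]
      nlinarith [abs_nonneg t]
    have h0 : (0:ℝ) ≤ |1 + t| ^ a := Real.rpow_nonneg (abs_nonneg _) a
    have := abs_sub_abs_le_abs_sub (|1 + t| ^ a) (1 + a * t)
    calc abs (|1 + t| ^ a - 1 - a * t) = abs (|1 + t| ^ a - (1 + a * t)) := by ring_nf
    _ ≤ |1 + t| ^ a + |1 + a * t| := by
        calc abs (|1 + t| ^ a - (1 + a * t)) ≤ abs (|1 + t| ^ a) + |1 + a * t| :=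
          abs_sub _ _
        _ = |1 + t| ^ a + |1 + a * t| := by rw [abs_of_nonneg h0]
    _ ≤ 9 * t ^ 2 + (1 + |a * t|) := by
        have : |1 + a * t| ≤ 1 + |a * t| := by simpa using abs_add_le 1 (a * t)
        linarith
    _ ≤ 17 * t ^ 2 := by nlinarith


/-- pointwise limit -/
lemma tendsto_ptwise {a : ℝ} (c : ℝ) :
    Tendsto (fun ε : ℝ => (|1 + ε * c| ^ a - 1 - a * (ε * c)) / ε ^ 2) (𝓝[>] (0:ℝ))
      (𝓝 (a * (a - 1) / 2 * c ^ 2)) := by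
  rcases eq_or_ne c 0 with rfl | hc
  · have : (fun ε : ℝ => (|1 + ε * 0| ^ a - 1 - a * (ε * 0)) / ε ^ 2) = fun _ => 0 := by
      funext ε; simp [Real.one_rpow]
    rw [this]; simpa using tendsto_const_nhds
  · have hcomp : Tendsto (fun ε : ℝ => ε * c) (𝓝[>] (0:ℝ)) (𝓝[≠] (0:ℝ)) := by
      rw [tendsto_nhdsWithin_iff]
      constructor
      · have h : Tendsto (fun ε : ℝ => ε * c) (𝓝 (0:ℝ)) (𝓝 (0 * c)) :=
          (continuous_id.mul continuous_const).tendsto (0:ℝ)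
        rw [zero_mul] at h
        exact h.mono_left nhdsWithin_le_nhds
      · filter_upwards [self_mem_nhdsWithin] with ε hε
        exact mul_ne_zero (ne_of_gt hε) hc
    have h1 := ((tendsto_taylor2_abs (a := a)).comp hcomp).mul_const (c ^ 2)
    refine h1.congr' ?_
    filter_upwards [self_mem_nhdsWithin] with ε hε
    have hε0 : (ε : ℝ) ≠ 0 := ne_of_gt hε
    rw [Function.comp_apply, mul_pow, ← div_div, div_mul_cancel₀ _ (pow_ne_zero 2 hc)]

/-- dominated convergence for the remainder integral -/
lemma tendsto_remainder_integral {X : Type*} [MeasurableSpace X] {μ : Measure X}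
    {u : X → ℝ} (hmeas : AEStronglyMeasurable u μ)
    (hint : Integrable (fun x => u x ^ 2) μ)
    {a : ℝ} (ha1 : 1 ≤ a) (ha2 : a ≤ 2) :
    Tendsto (fun ε : ℝ => ∫ x, (|1 + ε * u x| ^ a - 1 - a * (ε * u x)) / ε ^ 2 ∂μ)
      (𝓝[>] (0:ℝ)) (𝓝 (a * (a - 1) / 2 * ∫ x, u x ^ 2 ∂μ)) := by
  have key := tendsto_integral_filter_of_dominated_convergence
    (μ := μ) (l := 𝓝[>] (0:ℝ)) (F := fun ε x => (|1 + ε * u x| ^ a - 1 - a * (ε * u x)) / ε ^ 2)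
    (f := fun x => a * (a - 1) / 2 * u x ^ 2) (fun x => 17 * u x ^ 2)
    ?_ ?_ (hint.const_mul 17) ?_
  · rw [integral_const_mul] at key
    exact key
  · filter_upwards with ε
    have hcont : Continuous (fun y : ℝ => (|1 + ε * y| ^ a - 1 - a * (ε * y)) / ε ^ 2) := by
      apply Continuous.div_const
      apply Continuous.sub
      apply Continuous.sub
      · apply Continuous.rpow_const (by fun_prop)
        intro y; right; linarith
      · fun_prop
      · fun_prop
    exact hcont.comp_aestronglyMeasurable hmeas
  · filter_upwards [self_mem_nhdsWithin] with ε hε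
    filter_upwards with x
    have hε0 : (0:ℝ) < ε := hε
    have hb := global_bound ha1 ha2 (ε * u x)
    rw [Real.norm_eq_abs, abs_div, abs_of_nonneg (sq_nonneg ε)]
    rw [div_le_iff₀ (by positivity)]
    calc abs (|1 + ε * u x| ^ a - 1 - a * (ε * u x)) ≤ 17 * (ε * u x) ^ 2 := hb
    _ = 17 * u x ^ 2 * ε ^ 2 := by ring
  · filter_upwards with x
    exact tendsto_ptwise (u x)

lemma remainder_integrable {X : Type*} [MeasurableSpace X] {μ : Measure X}
    {u : X → ℝ} (hmeas : AEStronglyMeasurable u μ)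
    (hint : Integrable (fun x => u x ^ 2) μ)
    {a : ℝ} (ha1 : 1 ≤ a) (ha2 : a ≤ 2) {ε : ℝ} (hε : ε ≠ 0) :
    Integrable (fun x => (|1 + ε * u x| ^ a - 1 - a * (ε * u x)) / ε ^ 2) μ := by
  have hcont : Continuous (fun y : ℝ => (|1 + ε * y| ^ a - 1 - a * (ε * y)) / ε ^ 2) := by
    apply Continuous.div_const
    apply Continuous.sub
    apply Continuous.sub
    · apply Continuous.rpow_const (by fun_prop)
      intro y; right; linarith
    · fun_prop
    · fun_prop
  refine Integrable.mono' (hint.const_mul 17) (hcont.comp_aestronglyMeasurable hmeas) ?_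
  filter_upwards with x
  have hb := global_bound ha1 ha2 (ε * u x)
  rw [Real.norm_eq_abs, abs_div, abs_of_nonneg (sq_nonneg ε)]
  rw [div_le_iff₀ (by positivity)]
  calc abs (|1 + ε * u x| ^ a - 1 - a * (ε * u x)) ≤ 17 * (ε * u x) ^ 2 := hb
  _ = 17 * u x ^ 2 * ε ^ 2 := by ring


end AuxLemmas

/-- The generalized Poincaré inequality with exponent `p ∈ (1,2]` and constant `C`
implies the Poincaré (spectral gap) inequality with constant `(p/2) C`; equivalently,
the optimal constants satisfy `C_p(μ) ≥ (2/p) C₂(μ)`. -/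
theorem poincare_of_genPoincare
    (d : ℕ) (μ : Measure (Ed d)) (hμ : IsProbabilityMeasure μ)
    (p : ℝ) (hp : p ∈ Set.Ioc (1 : ℝ) 2)
    (C : ℝ) (hGP : GenPoincare μ p C) :
    Poincare μ (p / 2 * C) := by
  obtain ⟨hp1, hp2⟩ := hp
  intro u hu
  obtain ⟨hdiff, hu2, hgrad⟩ := hu
  have hp0 : (0:ℝ) < p := by linarith
  have hq1 : 1 ≤ 2 / p := by rw [le_div_iff₀ hp0]; linarith
  have hq2 : 2 / p ≤ 2 := by rw [div_le_iff₀ hp0]; nlinarith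
  set q : ℝ := 2 / p with hq
  have hpq : p * q = 2 := by rw [hq]; field_simp
  set m := ∫ y, u y ∂μ with hm
  set I2 := ∫ x, u x ^ 2 ∂μ with hI2
  set I := ∫ x, ‖fderiv ℝ u x‖ ^ 2 ∂μ with hI
  have hu_int : Integrable u μ := hu2.integrable (by norm_num)
  have hu2_int : Integrable (fun x => u x ^ 2) μ := hu2.integrable_sq
  have hmeas : AEStronglyMeasurable u μ := hdiff.continuous.aestronglyMeasurable
  -- LHS = I2 - m²
  have hLHS : (∫ x, (u x - m) ^ 2 ∂μ) = I2 - m ^ 2 := by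
    have hexp : ∀ x, (u x - m) ^ 2 = u x ^ 2 - (2 * m * u x - m ^ 2) := fun x => by ring
    have h2 : Integrable (fun x => 2 * m * u x - m ^ 2) μ :=
      (hu_int.const_mul (2 * m)).sub (integrable_const _)
    have h3 : Integrable (fun x => 2 * m * u x) μ := hu_int.const_mul (2 * m)
    rw [integral_congr_ae (Eventually.of_forall hexp),
      integral_sub hu2_int h2, integral_sub h3 (integrable_const _), integral_const_mul,
      integral_const]
    simp only [measure_univ, probReal_univ, ENNReal.toReal_one, smul_eq_mul, one_mul, ← hm, ← hI2]
    ring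
  -- remainder function and its limit
  set r : ℝ → ℝ := fun ε => ∫ x, (|1 + ε * u x| ^ q - 1 - q * (ε * u x)) / ε ^ 2 ∂μ with hr
  have hr_lim : Tendsto r (𝓝[>] 0) (𝓝 (q * (q - 1) / 2 * I2)) :=
    tendsto_remainder_integral hmeas hu2_int hq1 hq2
  set Φ : ℝ → ℝ := fun ε =>
    (I2 - p * r ε - (q * m + ε * r ε) ^ 2 * Gfun p (q * ε * m + ε ^ 2 * r ε)) / (p - 1)
    with hΦ
  -- the eventual inequality
  have hev : ∀ᶠ ε in 𝓝[>] (0:ℝ), Φ ε ≤ C * I := by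
    filter_upwards [self_mem_nhdsWithin] with ε hε
    have hε0 : (0:ℝ) < ε := hε
    set v : Ed d → ℝ := fun x => 1 + ε * u x with hv
    have hvdiff : Differentiable ℝ v := (hdiff.const_mul ε).const_add 1
    have hfder : ∀ x, fderiv ℝ v x = ε • fderiv ℝ u x := by
      intro x
      rw [hv]
      rw [fderiv_const_add, fderiv_const_mul (hdiff x)]
    have hvH1 : MemH1 μ v := by
      refine ⟨hvdiff, (memLp_const (1:ℝ)).add (hu2.const_mul ε), ?_⟩
      have : (fun x => ‖fderiv ℝ v x‖) = fun x => ‖ε‖ * ‖fderiv ℝ u x‖ := by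
        funext x; rw [hfder, norm_smul]
      rw [this]
      exact hgrad.const_mul ‖ε‖
    have key := hGP v hvH1
    -- compute ∫ v²
    have hInt1 : (∫ x, v x ^ 2 ∂μ) = 1 + (2 * ε * m + ε ^ 2 * I2) := by
      have hexp : ∀ x, v x ^ 2 = 1 + (2 * ε * u x + ε ^ 2 * u x ^ 2) := fun x => by
        rw [hv]; ring
      have h2 : Integrable (fun x => 2 * ε * u x + ε ^ 2 * u x ^ 2) μ :=
        (hu_int.const_mul (2 * ε)).add (hu2_int.const_mul (ε ^ 2))
      have h3 : Integrable (fun x => 2 * ε * u x) μ := hu_int.const_mul (2 * ε)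
      have h4 : Integrable (fun x => ε ^ 2 * u x ^ 2) μ := hu2_int.const_mul (ε ^ 2)
      rw [integral_congr_ae (Eventually.of_forall hexp),
        integral_add (integrable_const _) h2, integral_add h3 h4,
        integral_const_mul, integral_const_mul, integral_const]
      simp only [measure_univ, probReal_univ, ENNReal.toReal_one, smul_eq_mul, one_mul, ← hm, ← hI2]
    -- compute ∫ |v|^q
    have hhint : Integrable
        (fun x => (|1 + ε * u x| ^ q - 1 - q * (ε * u x)) / ε ^ 2) μ :=
      remainder_integrable hmeas hu2_int hq1 hq2 hε0.ne'
    have hInt2 : (∫ x, |v x| ^ (2 / p) ∂μ) = 1 + (q * ε * m + ε ^ 2 * r ε) := by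
      have hexp : ∀ x, |v x| ^ (2 / p)
          = 1 + (q * ε * u x
            + ε ^ 2 * ((|1 + ε * u x| ^ q - 1 - q * (ε * u x)) / ε ^ 2)) := by
        intro x
        rw [hv, ← hq]
        field_simp
        ring
      have h2 : Integrable (fun x => q * ε * u x
          + ε ^ 2 * ((|1 + ε * u x| ^ q - 1 - q * (ε * u x)) / ε ^ 2)) μ :=
        (hu_int.const_mul (q * ε)).add (hhint.const_mul (ε ^ 2))
      have h3 : Integrable (fun x => q * ε * u x) μ := hu_int.const_mul (q * ε)
      have h4 : Integrable
          (fun x => ε ^ 2 * ((|1 + ε * u x| ^ q - 1 - q * (ε * u x)) / ε ^ 2)) μ :=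
        hhint.const_mul (ε ^ 2)
      rw [integral_congr_ae (Eventually.of_forall hexp),
        integral_add (integrable_const _) h2, integral_add h3 h4,
        integral_const_mul, integral_const_mul, integral_const]
      simp only [measure_univ, probReal_univ, ENNReal.toReal_one, smul_eq_mul, one_mul, ← hm, ← hr]
      rfl
    -- compute ∫ ‖∇v‖²
    have hInt3 : (∫ x, ‖fderiv ℝ v x‖ ^ 2 ∂μ) = ε ^ 2 * I := by
      have hexp : ∀ x, ‖fderiv ℝ v x‖ ^ 2 = ε ^ 2 * ‖fderiv ℝ u x‖ ^ 2 := fun x => by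
        rw [hfder, norm_smul, mul_pow, Real.norm_eq_abs, sq_abs]
      rw [integral_congr_ae (Eventually.of_forall hexp), integral_const_mul, ← hI]
    rw [hInt1, hInt2, hInt3] at key
    -- expand the power using Gfun
    rw [Gfun_identity p (q * ε * m + ε ^ 2 * r ε)] at key
    have hkey2 : ε ^ 2 * Φ ε ≤ C * (ε ^ 2 * I) := by
      refine le_trans (le_of_eq ?_) key
      rw [hΦ]
      have hp1' : p - 1 ≠ 0 := by intro h; linarith
      linear_combination (ε * m / (p - 1)) * hpq
    rw [show C * (ε ^ 2 * I) = ε ^ 2 * (C * I) by ring] at hkey2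
    exact le_of_mul_le_mul_left hkey2 (by positivity)
  -- limit of Φ
  have hid : Tendsto (fun ε : ℝ => ε) (𝓝[>] (0:ℝ)) (𝓝 0) :=
    tendsto_id.mono_right nhdsWithin_le_nhds
  have hqm : Tendsto (fun ε : ℝ => q * m + ε * r ε) (𝓝[>] (0:ℝ))
      (𝓝 (q * m + 0 * (q * (q - 1) / 2 * I2))) :=
    tendsto_const_nhds.add (hid.mul hr_lim)
  have hs : Tendsto (fun ε : ℝ => q * ε * m + ε ^ 2 * r ε) (𝓝[>] (0:ℝ)) (𝓝 0) := by
    have h1 := hid.mul hqm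
    rw [zero_mul] at h1
    refine h1.congr fun ε => by ring
  have hG : Tendsto (fun ε : ℝ => Gfun p (q * ε * m + ε ^ 2 * r ε)) (𝓝[>] (0:ℝ))
      (𝓝 (p * (p - 1) / 2)) := (tendsto_Gfun p).comp hs
  have hΦlim : Tendsto Φ (𝓝[>] (0:ℝ))
      (𝓝 ((I2 - p * (q * (q - 1) / 2 * I2)
        - (q * m + 0 * (q * (q - 1) / 2 * I2)) ^ 2 * (p * (p - 1) / 2)) / (p - 1))) := by
    rw [hΦ]
    exact ((tendsto_const_nhds.sub (hr_lim.const_mul p)).sub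
      ((hqm.pow 2).mul hG)).div_const (p - 1)
  have hL : (I2 - p * (q * (q - 1) / 2 * I2)
      - (q * m + 0 * (q * (q - 1) / 2 * I2)) ^ 2 * (p * (p - 1) / 2)) / (p - 1) ≤ C * I :=
    le_of_tendsto hΦlim hev
  have hp1' : p - 1 ≠ 0 := by intro h; linarith
  have hLeq : (I2 - p * (q * (q - 1) / 2 * I2)
      - (q * m + 0 * (q * (q - 1) / 2 * I2)) ^ 2 * (p * (p - 1) / 2)) / (p - 1)
      = 2 / p * (I2 - m ^ 2) := by
    rw [hq]
    field_simp
    ring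
  rw [hLeq] at hL
  rw [hLHS]
  have h2 := mul_le_mul_of_nonneg_left hL (by positivity : (0:ℝ) ≤ p / 2)
  calc I2 - m ^ 2 = p / 2 * (2 / p * (I2 - m ^ 2)) := by field_simp
  _ ≤ p / 2 * (C * I) := h2
  _ = p / 2 * C * I := by ring
end
end

section
/- Let μ be a probability measure on ℝ^d satisfying the Poincaré (spectral gap) inequality with constant C₂, i.e. ∫|u − ū|² dμ ≤ C₂ ∫|∇u|² dμ for all u ∈ H¹(μ) with ū = ∫u dμ. Then for every p ∈ (1, 2], μ satisfies the generalized Poincaré inequality with constant C₂/(p−1), i.e. (1/(p-1)) [∫|u|² dμ − (∫|u|^{2/p} dμ)^p] ≤ (C₂/(p−1)) ∫|∇u|² dμ for all u ∈ H¹(μ). -/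
open MeasureTheory Real Filter
open scoped ENNReal RealInnerProductSpace

noncomputable section

/-- The Poincaré (spectral gap) inequality with constant `C₂` implies, for every
`p ∈ (1,2]`, the generalized Poincaré inequality with constant `C₂/(p−1)`. -/
theorem genPoincare_of_poincare
    (d : ℕ) (μ : Measure (Ed d)) (hμ : IsProbabilityMeasure μ)
    (C₂ : ℝ) (hP : Poincare μ C₂) :
    ∀ p ∈ Set.Ioc (1 : ℝ) 2, GenPoincare μ p (C₂ / (p - 1)) := by
  rintro p ⟨hp1, hp2⟩ u hu
  obtain ⟨hdiff, hu2, hgrad⟩ := hu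
  have hcont : Continuous u := hdiff.continuous
  have hp0 : (0:ℝ) < p := by linarith
  set q : ℝ := 2 / p with hq
  have hq1 : 1 ≤ q := by rw [hq, le_div_iff₀ hp0]; linarith
  have hq2 : q ≤ 2 := by rw [hq, div_le_iff₀ hp0]; nlinarith
  -- integrability
  have hu_int : Integrable u μ := hu2.integrable (by norm_num)
  have habs_int : Integrable (fun x => |u x|) μ := hu_int.abs
  have husq_int : Integrable (fun x => u x ^ 2) μ := hu2.integrable_sq
  have hrpow2 : ∀ x : ℝ, x ^ (2:ℝ) = x ^ 2 := fun x => by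
    rw [show (2:ℝ) = ((2:ℕ):ℝ) by norm_num, Real.rpow_natCast]
  have hcq : Continuous fun x => |u x| ^ q :=
    (hcont.abs).rpow_const (fun x => Or.inr (by linarith))
  have hq_int : Integrable (fun x => |u x| ^ q) μ := by
    refine (husq_int.add (integrable_const 1)).mono' hcq.aestronglyMeasurable ?_
    filter_upwards with x
    rw [Real.norm_eq_abs, abs_of_nonneg (Real.rpow_nonneg (abs_nonneg _) _)]
    rcases le_or_gt (|u x|) 1 with h | h
    · calc |u x| ^ q ≤ 1 := Real.rpow_le_one (abs_nonneg _) h (by linarith)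
        _ ≤ u x ^ 2 + 1 := by nlinarith [sq_nonneg (u x)]
    · calc |u x| ^ q ≤ |u x| ^ (2:ℝ) :=
            Real.rpow_le_rpow_of_exponent_le h.le hq2
        _ = u x ^ 2 := by rw [hrpow2, sq_abs]
        _ ≤ u x ^ 2 + 1 := by linarith
  set c := ∫ x, u x ∂μ with hc
  -- Jensen's inequality
  have hjensen : (∫ x, |u x| ∂μ) ^ q ≤ ∫ x, |u x| ^ q ∂μ := by
    have hconv : ConvexOn ℝ (Set.Ici 0) fun x : ℝ => x ^ q := convexOn_rpow hq1
    have hgc : ContinuousOn (fun x : ℝ => x ^ q) (Set.Ici 0) :=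
      continuousOn_id.rpow_const fun x _ => Or.inr (by linarith)
    have := hconv.map_integral_le hgc isClosed_Ici
      (Filter.Eventually.of_forall fun x => abs_nonneg (u x)) habs_int
      (by exact hq_int)
    simpa using this
  have habs_nonneg : 0 ≤ ∫ x, |u x| ∂μ := integral_nonneg fun x => abs_nonneg _
  have hA : (∫ x, |u x| ∂μ) ^ 2 ≤ (∫ x, |u x| ^ q ∂μ) ^ p := by
    have h1 : ((∫ x, |u x| ∂μ) ^ q) ^ p ≤ (∫ x, |u x| ^ q ∂μ) ^ p :=
      Real.rpow_le_rpow (Real.rpow_nonneg habs_nonneg _) hjensen hp0.le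
    rwa [← Real.rpow_natCast ((∫ x, |u x| ∂μ)) 2, show ((2:ℕ):ℝ) = q * p by
        rw [hq, div_mul_cancel₀ _ hp0.ne']; norm_num, Real.rpow_mul habs_nonneg]
  have hc2 : c ^ 2 ≤ (∫ x, |u x| ∂μ) ^ 2 := by
    have h1 : |c| ≤ ∫ x, |u x| ∂μ := by
      simpa [Real.norm_eq_abs] using norm_integral_le_integral_norm (μ := μ) u
    calc c ^ 2 = |c| ^ 2 := (sq_abs c).symm
      _ ≤ (∫ x, |u x| ∂μ) ^ 2 := pow_le_pow_left₀ (abs_nonneg c) h1 2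
  -- variance identity
  have hvar : ∫ x, (u x - c) ^ 2 ∂μ = (∫ x, u x ^ 2 ∂μ) - c ^ 2 := by
    have hpt : ∀ x, (u x - c) ^ 2 = u x ^ 2 - (2 * c) * u x + c ^ 2 := fun x => by ring
    simp_rw [hpt]
    have hint1 : Integrable (fun x => u x ^ 2 - 2 * c * u x) μ :=
      husq_int.sub (hu_int.const_mul (2 * c))
    have hint2 : Integrable (fun x => 2 * c * u x) μ := hu_int.const_mul (2 * c)
    rw [integral_add hint1 (integrable_const _), integral_sub husq_int hint2,
        integral_const_mul, integral_const]
    simp only [measure_univ, probReal_univ, ENNReal.toReal_one, smul_eq_mul, one_mul, ← hc]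
    ring
  have hkey : (∫ x, u x ^ 2 ∂μ) - (∫ x, |u x| ^ q ∂μ) ^ p
      ≤ C₂ * ∫ x, ‖fderiv ℝ u x‖ ^ 2 ∂μ :=
    calc (∫ x, u x ^ 2 ∂μ) - (∫ x, |u x| ^ q ∂μ) ^ p
        ≤ (∫ x, u x ^ 2 ∂μ) - c ^ 2 := by linarith
      _ = ∫ x, (u x - c) ^ 2 ∂μ := hvar.symm
      _ ≤ C₂ * ∫ x, ‖fderiv ℝ u x‖ ^ 2 ∂μ := hP u ⟨hdiff, hu2, hgrad⟩
  have hgoal : C₂ / (p - 1) * ∫ x, ‖fderiv ℝ u x‖ ^ 2 ∂μ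
      = 1 / (p - 1) * (C₂ * ∫ x, ‖fderiv ℝ u x‖ ^ 2 ∂μ) := by ring
  rw [hgoal]
  exact mul_le_mul_of_nonneg_left hkey (le_of_lt (div_pos one_pos (by linarith)))
end
end

section
/- Let d ≥ 1, p ∈ (1, 2), p' = p/(p-1), and let W, Z : ℝ^d → ℝ be measurable such that dν = e^{-W} dx and dμ = e^{-2Z} dν are probability measures on ℝ^d, with Z ∈ L^{p'}(dν). Then for every measurable g : ℝ^d → ℝ with g ∈ L²(ν), writing v := g e^Z, one has (∫|v|^{2/p} dμ)^p − (∫|g|^{2/p} dν)^p ≥ −2(p−1) ‖Z‖_{L^{p'}(ν)} ∫|g|² dν. -/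
open MeasureTheory Real Filter
open scoped ENNReal RealInnerProductSpace

noncomputable section

set_option maxHeartbeats 1000000 in
private lemma key_convex (p : ℝ) (hp1 : 1 < p) (A B c : ℝ) (hA : 0 ≤ A) (hB : 0 ≤ B) (hc : 0 ≤ c)
    (h : A - c ≤ B) : A ^ p - p * A ^ (p - 1) * c ≤ B ^ p := by
  have hBp : 0 ≤ B ^ p := Real.rpow_nonneg hB _
  rcases le_or_gt A c with hAc | hAc
  · have h1 : A ^ p ≤ p * A ^ (p - 1) * c := by
      rcases eq_or_lt_of_le hA with hA0 | hA0
      · rw [← hA0, Real.zero_rpow (by positivity), Real.zero_rpow (by intro hh; linarith [hh] : p - 1 ≠ 0)]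
        simp
      · have hAp : A ^ p = A ^ (p - 1) * A := by
          rw [← Real.rpow_add_one (ne_of_gt hA0)]; ring_nf
        have hpow : 0 ≤ A ^ (p - 1) := Real.rpow_nonneg hA _
        calc A ^ p = A ^ (p - 1) * A := hAp
          _ ≤ A ^ (p - 1) * c := mul_le_mul_of_nonneg_left hAc hpow
          _ ≤ p * (A ^ (p - 1) * c) := le_mul_of_one_le_left (by positivity) hp1.le
          _ = p * A ^ (p - 1) * c := by ring
    linarith
  · have hA0 : 0 < A := lt_of_le_of_lt hc hAc
    set s : ℝ := -c / A with hs_def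
    have hs : -1 ≤ s := by
      rw [hs_def, neg_div, neg_le_neg_iff]
      rw [div_le_one hA0]
      linarith
    have hber := one_add_mul_self_le_rpow_one_add hs hp1.le
    have h1s : 1 + s = (A - c) / A := by
      field_simp [hs_def]
      rw [hs_def, add_mul, div_mul_cancel₀ _ hA0.ne']; ring
    have h1s_nonneg : 0 ≤ 1 + s := by
      rw [h1s]
      have hacn : 0 ≤ A - c := by linarith
      positivity
    have hApnn : 0 ≤ A ^ p := Real.rpow_nonneg hA _ -- hA is 0 ≤ A already
    have key : A ^ p * (1 + p * s) ≤ (A - c) ^ p := by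
      calc A ^ p * (1 + p * s) ≤ A ^ p * (1 + s) ^ p := mul_le_mul_of_nonneg_left hber hApnn
        _ = (A * (1 + s)) ^ p := (Real.mul_rpow hA h1s_nonneg).symm
        _ = (A - c) ^ p := by rw [h1s]; congr 1; field_simp
    have h2 : (A - c) ^ p ≤ B ^ p := Real.rpow_le_rpow (by linarith) h (by linarith)
    have h3 : A ^ p * (1 + p * s) = A ^ p - p * A ^ (p - 1) * c := by
      have hsub : A ^ (p - 1) = A ^ p / A := Real.rpow_sub_one (ne_of_gt hA0) p
      rw [hsub, hs_def]
      field_simp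
      ring
    linarith

set_option maxHeartbeats 1000000 in
/-- The lower bound on `𝓑 = (∫|v|^{2/p} dμ)^p − (∫|g|^{2/p} dν)^p` for `v = g e^Z` and
`dμ = e^{-2Z} dν`: `𝓑 ≥ −2(p−1)‖Z‖_{L^{p'}(ν)} ∫|g|² dν`. -/
theorem jensen_lower_bound_for_B
    (d : ℕ) (hd : 1 ≤ d) (p p' : ℝ) (hp : p ∈ Set.Ioo (1 : ℝ) 2) (hp' : p' = p / (p - 1))
    (W Z : Ed d → ℝ) (hW : Measurable W) (hZmeas : Measurable Z)
    (ν μ : Measure (Ed d))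
    (hν : ν = volume.withDensity fun x => ENNReal.ofReal (Real.exp (-W x)))
    (hμ : μ = ν.withDensity fun x => ENNReal.ofReal (Real.exp (-2 * Z x)))
    (hνprob : IsProbabilityMeasure ν) (hμprob : IsProbabilityMeasure μ)
    (hZLp : MemLp Z (ENNReal.ofReal p') ν)
    (g : Ed d → ℝ) (hgmeas : Measurable g) (hg : MemLp g 2 ν)
    (v : Ed d → ℝ) (hv : v = fun x => g x * Real.exp (Z x)) :
    (∫ x, |v x| ^ (2 / p) ∂μ) ^ p - (∫ x, |g x| ^ (2 / p) ∂ν) ^ p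
      ≥ -2 * (p - 1) * Lnorm ν p' Z * ∫ x, g x ^ 2 ∂ν := by
  obtain ⟨hp1, hp2⟩ := hp
  have hp0 : (0:ℝ) < p := by linarith
  have hpq : p.HolderConjugate p' := (Real.holderConjugate_iff_eq_conjExponent hp1).2 hp'
  have hp'0 : (0:ℝ) < p' := hpq.symm.pos
  set c₁ : ℝ := 2 * (p - 1) / p with hc₁_def
  have hc₁ : 0 ≤ c₁ := by
    apply div_nonneg (by linarith) hp0.le
  set φ : Ed d → ℝ := fun x => |g x| ^ (2/p) with hφ_def
  set ψ : Ed d → ℝ := fun x => Real.exp (-(c₁ * Z x)) with hψ_def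
  have hφnn : ∀ x, 0 ≤ φ x := fun x => Real.rpow_nonneg (abs_nonneg _) _
  -- MemLp of φ at exponent p
  have hofReal2p : (2 : ℝ≥0∞) / ENNReal.ofReal (2/p) = ENNReal.ofReal p := by
    rw [eq_comm, ENNReal.eq_div_iff (by simp [ENNReal.ofReal_eq_zero]; positivity) ENNReal.ofReal_ne_top,
      ← ENNReal.ofReal_mul (by positivity)]
    rw [div_mul_cancel₀ _ hp0.ne']
    simp
  have hφLp : MemLp φ (ENNReal.ofReal p) ν := by
    have h2p : (0:ℝ) ≤ 2/p := by positivity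
    have h := hg.norm_rpow_div (ENNReal.ofReal (2/p))
    simp only [Real.norm_eq_abs, ENNReal.toReal_ofReal h2p] at h
    rwa [hofReal2p] at h
  -- exp(-2Z) is integrable over ν with integral 1
  have hlint : ∫⁻ x, ENNReal.ofReal (Real.exp (-2 * Z x)) ∂ν = 1 := by
    have hm : μ Set.univ = 1 := measure_univ
    rw [hμ, withDensity_apply _ MeasurableSet.univ, setLIntegral_univ] at hm
    exact hm
  have hexpInt : Integrable (fun x => Real.exp (-2 * Z x)) ν := by
    refine ⟨((hZmeas.const_mul (-2)).exp).aestronglyMeasurable, ?_⟩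
    rw [hasFiniteIntegral_iff_norm]
    simp only [Real.norm_eq_abs, abs_of_pos (Real.exp_pos _)]
    rw [hlint]
    exact ENNReal.one_lt_top
  -- MemLp of ψ at exponent p'
  have hofReal1p' : (1 : ℝ≥0∞) / ENNReal.ofReal (1/p') = ENNReal.ofReal p' := by
    rw [eq_comm, ENNReal.eq_div_iff (by simp [ENNReal.ofReal_eq_zero]; positivity) ENNReal.ofReal_ne_top,
      ← ENNReal.ofReal_mul (by positivity)]
    rw [div_mul_cancel₀ _ hp'0.ne']
    simp
  have hψLp : MemLp ψ (ENNReal.ofReal p') ν := by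
    have h1p' : (0:ℝ) ≤ 1/p' := by positivity
    have h := (memLp_one_iff_integrable.mpr hexpInt).norm_rpow_div (ENNReal.ofReal (1/p'))
    simp only [Real.norm_eq_abs, ENNReal.toReal_ofReal h1p',
      abs_of_pos (Real.exp_pos _)] at h
    rw [hofReal1p'] at h
    have hfun : (fun x => Real.exp (-2 * Z x) ^ (1/p')) = ψ := by
      funext x
      rw [← Real.exp_mul, hψ_def]
      congr 1
      have h1p'eq : 1/p' = (p-1)/p := by
        rw [hp']
        field_simp
      rw [h1p'eq, hc₁_def]
      ring
    rwa [hfun] at h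
  -- conjugate exponent identity in ℝ≥0∞
  have hconj : (1 : ℝ≥0∞) / 1 = 1 / ENNReal.ofReal p + 1 / ENNReal.ofReal p' := by
    simp only [one_div, inv_one]
    exact hpq.inv_add_inv_ennreal.symm
  -- integrability of products
  have hInt2 : Integrable (fun x => φ x * ψ x) ν := by
    have h := hψLp.smul hφLp (hpqr := ⟨by rw [inv_one]; exact hpq.inv_add_inv_ennreal⟩)
    rwa [memLp_one_iff_integrable] at h
  have hIntZ : Integrable (fun x => φ x * Z x) ν := by
    have h := hZLp.smul hφLp (hpqr := ⟨by rw [inv_one]; exact hpq.inv_add_inv_ennreal⟩)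
    rwa [memLp_one_iff_integrable] at h
  have hIntφ : Integrable φ ν :=
    hφLp.integrable (by exact ENNReal.one_le_ofReal.mpr hp1.le)
  have hIntφZ : Integrable (fun x => φ x * |Z x|) ν := by
    have h := hIntZ.abs
    refine h.congr (Eventually.of_forall fun x => ?_)
    show |φ x * Z x| = φ x * |Z x|
    rw [abs_mul, abs_of_nonneg (hφnn x)]
  -- rewrite B1 as an integral over ν
  have hB1 : (∫ x, |v x| ^ (2 / p) ∂μ) = ∫ x, φ x * ψ x ∂ν := by
    have hμ' : μ = ν.withDensity (fun x => (((Real.exp (-2 * Z x)).toNNReal : NNReal) : ℝ≥0∞)) := hμ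
    have hmeasNN : Measurable fun x => (Real.exp (-2 * Z x)).toNNReal :=
      ((hZmeas.const_mul (-2)).exp).real_toNNReal
    rw [hμ', integral_withDensity_eq_integral_smul hmeasNN _]
    refine integral_congr_ae (Eventually.of_forall fun x => ?_)
    show (Real.exp (-2 * Z x)).toNNReal • |v x| ^ (2/p) = φ x * ψ x
    rw [NNReal.smul_def, Real.coe_toNNReal _ (Real.exp_pos _).le, smul_eq_mul]
    have hvx : |v x| = |g x| * Real.exp (Z x) := by
      simp only [hv]
      rw [abs_mul, abs_of_pos (Real.exp_pos _)]
    rw [hvx, Real.mul_rpow (abs_nonneg _) (Real.exp_pos _).le, ← Real.exp_mul]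
    have hexp : Real.exp (-2 * Z x) * Real.exp (Z x * (2/p)) = Real.exp (-(c₁ * Z x)) := by
      rw [← Real.exp_add]
      congr 1
      rw [hc₁_def]
      field_simp
      ring
    calc Real.exp (-2 * Z x) * (|g x| ^ (2/p) * Real.exp (Z x * (2/p)))
        = |g x| ^ (2/p) * (Real.exp (-2 * Z x) * Real.exp (Z x * (2/p))) := by ring
      _ = φ x * ψ x := by
          rw [hexp]
  -- pointwise lower bound and integral comparison
  have hptwise : ∀ x, φ x - c₁ * (φ x * Z x) ≤ φ x * ψ x := by
    intro x
    have h1 : 1 - c₁ * Z x ≤ ψ x := by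
      have := Real.add_one_le_exp (-(c₁ * Z x))
      simp only [hψ_def]
      linarith
    have := mul_le_mul_of_nonneg_left h1 (hφnn x)
    calc φ x - c₁ * (φ x * Z x) = φ x * (1 - c₁ * Z x) := by ring
      _ ≤ φ x * ψ x := this
  have hIntLHS : Integrable (fun x => φ x - c₁ * (φ x * Z x)) ν :=
    hIntφ.sub (hIntZ.const_mul c₁)
  have hcomp : (∫ x, φ x ∂ν) - c₁ * ∫ x, φ x * Z x ∂ν ≤ ∫ x, φ x * ψ x ∂ν := by
    have h := integral_mono hIntLHS hInt2 hptwise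
    rwa [integral_sub hIntφ (hIntZ.const_mul c₁), integral_const_mul] at h
  have hZabs : ∫ x, φ x * Z x ∂ν ≤ ∫ x, φ x * |Z x| ∂ν := by
    refine integral_mono hIntZ hIntφZ fun x => ?_
    exact mul_le_mul_of_nonneg_left (le_abs_self _) (hφnn x)
  -- the integral of φ^p equals ∫ g²
  have hφpow : ∀ x, φ x ^ p = g x ^ 2 := by
    intro x
    show (|g x| ^ (2/p)) ^ p = g x ^ 2
    rw [← Real.rpow_mul (abs_nonneg _), div_mul_cancel₀ _ hp0.ne']
    rw [show (2:ℝ) = ((2:ℕ):ℝ) by norm_num, Real.rpow_natCast, sq_abs]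
  -- MemLp of |Z|
  have hZabsLp : MemLp (fun x => |Z x|) (ENNReal.ofReal p') ν := by
    have h := hZLp.norm
    simpa only [Real.norm_eq_abs] using h
  -- Hölder
  have hHolder : ∫ x, φ x * |Z x| ∂ν
      ≤ (∫ x, g x ^ 2 ∂ν) ^ (1/p) * Lnorm ν p' Z := by
    have h := integral_mul_le_Lp_mul_Lq_of_nonneg hpq
      (Eventually.of_forall hφnn) (Eventually.of_forall fun x => abs_nonneg (Z x)) hφLp hZabsLp
    calc ∫ x, φ x * |Z x| ∂ν ≤ (∫ x, φ x ^ p ∂ν) ^ (1/p) * (∫ x, |Z x| ^ p' ∂ν) ^ (1/p') := h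
      _ = (∫ x, g x ^ 2 ∂ν) ^ (1/p) * Lnorm ν p' Z := by
          rw [Lnorm]
          congr 2
          exact integral_congr_ae (Eventually.of_forall fun x => hφpow x)
  -- Jensen
  have hJensen : (∫ x, φ x ∂ν) ≤ (∫ x, g x ^ 2 ∂ν) ^ (1/p) := by
    have h := integral_mul_le_Lp_mul_Lq_of_nonneg hpq
      (Eventually.of_forall hφnn) (Eventually.of_forall fun _ => zero_le_one) hφLp
      (memLp_const (1:ℝ))
    simp only [mul_one, Real.one_rpow, integral_const, measure_univ, ENNReal.toReal_one,
      one_smul, probReal_univ] at h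
    calc (∫ x, φ x ∂ν) ≤ (∫ x, φ x ^ p ∂ν) ^ (1/p) := h
      _ = (∫ x, g x ^ 2 ∂ν) ^ (1/p) := by
          congr 1
          exact integral_congr_ae (Eventually.of_forall fun x => hφpow x)
  -- notation
  set A : ℝ := ∫ x, |g x| ^ (2/p) ∂ν with hA_def
  set Eg : ℝ := ∫ x, g x ^ 2 ∂ν with hEg_def
  set N : ℝ := Lnorm ν p' Z with hN_def
  set B : ℝ := ∫ x, φ x * ψ x ∂ν with hB_def
  have hAφ : A = ∫ x, φ x ∂ν := rfl
  have hA0 : 0 ≤ A := integral_nonneg fun x => Real.rpow_nonneg (abs_nonneg _) _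
  have hE0 : 0 ≤ Eg := integral_nonneg fun x => sq_nonneg _
  have hN0 : 0 ≤ N := Real.rpow_nonneg
    (integral_nonneg fun x => Real.rpow_nonneg (abs_nonneg _) _) _
  have hB0 : 0 ≤ B := integral_nonneg fun x => mul_nonneg (hφnn x) (Real.exp_pos _).le
  set c : ℝ := c₁ * (Eg ^ (1/p) * N) with hc_def
  have hc0 : 0 ≤ c := by
    have := Real.rpow_nonneg hE0 (1/p)
    positivity
  have hB_ge : A - c ≤ B := by
    have h1 : c₁ * ∫ x, φ x * Z x ∂ν ≤ c := by
      rw [hc_def]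
      exact mul_le_mul_of_nonneg_left (hZabs.trans hHolder) hc₁
    rw [hAφ]
    linarith
  have hkey := key_convex p hp1 A B c hA0 hB0 hc0 hB_ge
  -- bound p * A^(p-1) * c
  have hA_le : A ≤ Eg ^ (1/p) := by rw [hAφ]; exact hJensen
  have hbound : p * A ^ (p-1) * c ≤ 2 * (p-1) * N * Eg := by
    have h1 : A ^ (p-1) ≤ (Eg ^ (1/p)) ^ (p-1) :=
      Real.rpow_le_rpow hA0 hA_le (by linarith)
    have hEp : 0 ≤ Eg ^ (1/p) := Real.rpow_nonneg hE0 _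
    have h2 : A ^ (p-1) * Eg ^ (1/p) ≤ Eg := by
      calc A ^ (p-1) * Eg ^ (1/p) ≤ (Eg ^ (1/p)) ^ (p-1) * Eg ^ (1/p) :=
            mul_le_mul_of_nonneg_right h1 hEp
        _ = Eg ^ ((1/p) * (p-1)) * Eg ^ (1/p) := by rw [← Real.rpow_mul hE0]
        _ = Eg ^ ((1/p) * (p-1) + 1/p) := (Real.rpow_add' hE0 (by rw [show (1/p)*(p-1)+1/p = (1:ℝ) by field_simp; ring]; norm_num)).symm
        _ = Eg := by
            have : (1/p) * (p-1) + 1/p = 1 := by field_simp; ring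
            rw [this, Real.rpow_one]
    have hpc : p * c₁ = 2 * (p-1) := by
      rw [hc₁_def]
      field_simp
    have hApn : 0 ≤ A ^ (p-1) := Real.rpow_nonneg hA0 _
    calc p * A ^ (p-1) * c = (p * c₁) * ((A ^ (p-1) * Eg ^ (1/p)) * N) := by
          rw [hc_def]; ring
      _ ≤ (p * c₁) * (Eg * N) := by
          apply mul_le_mul_of_nonneg_left _ (by positivity)
          exact mul_le_mul_of_nonneg_right h2 hN0
      _ = 2 * (p-1) * N * Eg := by rw [hpc]; ring
  rw [hB1, ge_iff_le]
  -- goal : -2 * (p-1) * N * Eg ≤ B ^ p - A ^ p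
  have : A ^ p - p * A ^ (p-1) * c ≤ B ^ p := hkey
  linarith
end
end
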